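/- arXiv:1806.03614 — 6 statements merged into one kernel-verified Lean document; each statement's English description precedes it below -/
import Mathlib

section
/- Let G be a finite abelian group, D(G) its generalized dihedral group (assumed non-abelian), and \Gamma the commuting graph of D(G). Then two distinct vertices u = (g, \epsilon) and v = (h, \delta) are adjacent in \Gamma if and only if one of the following holds: (i) \epsilon = 1 and g^2 = e; (ii) \delta = 1 and h^2 = e; (iii) \epsilon = \delta = 1; (iv) \epsilon = \delta = -1 and g^2 = h^2. (This expresses the decomposition \Gamma = K_{2^r} \vee (K_{n-2^r} \cup (n/2^r) K_{2^r}).) -/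
@[ext]
structure GenDihedral (G : Type) where
  g : G
  b : Bool
  deriving DecidableEq

namespace GenDihedral

variable {G : Type} [CommGroup G]

instance : Mul (GenDihedral G) :=
  ⟨fun a c => ⟨a.g * (if a.b then c.g⁻¹ else c.g), xor a.b c.b⟩⟩

instance : One (GenDihedral G) := ⟨⟨1, false⟩⟩

instance : Inv (GenDihedral G) := ⟨fun a => ⟨if a.b then a.g else a.g⁻¹, a.b⟩⟩

theorem mul_def (a c : GenDihedral G) :
    a * c = ⟨a.g * (if a.b then c.g⁻¹ else c.g), xor a.b c.b⟩ := rfl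

theorem one_def : (1 : GenDihedral G) = ⟨1, false⟩ := rfl

theorem inv_def (a : GenDihedral G) : a⁻¹ = ⟨if a.b then a.g else a.g⁻¹, a.b⟩ := rfl

instance : Group (GenDihedral G) where
  mul_assoc a c d := by
    obtain ⟨g₁, b₁⟩ := a; obtain ⟨g₂, b₂⟩ := c; obtain ⟨g₃, b₃⟩ := d
    cases b₁ <;> cases b₂ <;> cases b₃ <;>
      simp [mul_def, mul_assoc, mul_comm, mul_left_comm, mul_inv, inv_inv]
  one_mul a := by obtain ⟨g, b⟩ := a; cases b <;> simp [mul_def, one_def]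
  mul_one a := by obtain ⟨g, b⟩ := a; cases b <;> simp [mul_def, one_def]
  inv_mul_cancel a := by
    obtain ⟨g, b⟩ := a; cases b <;> simp [mul_def, one_def, inv_def]

instance [Fintype G] : Fintype (GenDihedral G) :=
  Fintype.ofEquiv (G × Bool)
    ⟨fun p => ⟨p.1, p.2⟩, fun x => (x.g, x.b), fun _ => rfl, fun _ => rfl⟩

instance [DecidableEq G] (a c : GenDihedral G) : Decidable (Commute a c) :=
  decidable_of_iff (a * c = c * a) Iff.rfl

end GenDihedral

namespace GenDihedral

def commGraph (G : Type) [CommGroup G] : SimpleGraph (GenDihedral G) where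
  Adj u v := u ≠ v ∧ u * v = v * u
  symm := ⟨fun _ _ h => ⟨h.1.symm, h.2.symm⟩⟩
  loopless := ⟨fun _ h => h.1 rfl⟩

instance {G : Type} [CommGroup G] [DecidableEq G] : DecidableRel (commGraph G).Adj :=
  fun _ _ => instDecidableAnd

end GenDihedral

open GenDihedral in
/-- Structure of the commuting graph of a non-abelian `D(G)`
(`Γ = K_{2^r} ∨ (K_{n-2^r} ∪ (n/2^r) K_{2^r})`): two distinct vertices `u = (g, ε)`,
`v = (h, δ)` are adjacent iff `u` is central, or `v` is central, or both lie in `G₁`,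
or both lie in `G₂` with `g² = h²`. -/
theorem stmt6 {G : Type} [CommGroup G] [Fintype G] (hna : ∃ g : G, g ^ 2 ≠ 1)
    (u v : GenDihedral G) (huv : u ≠ v) :
    (commGraph G).Adj u v ↔
      (u.b = false ∧ u.g ^ 2 = 1) ∨ (v.b = false ∧ v.g ^ 2 = 1) ∨
      (u.b = false ∧ v.b = false) ∨ (u.b = true ∧ v.b = true ∧ u.g ^ 2 = v.g ^ 2) := by
  obtain ⟨g, ε⟩ := u; obtain ⟨h, δ⟩ := v
  show (_ ≠ _ ∧ _) ↔ _
  rw [and_iff_right huv]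
  cases ε <;> cases δ <;>
    simp only [mul_def, GenDihedral.ext_iff, Bool.xor_false, Bool.xor_true,
      Bool.false_xor, Bool.true_xor, Bool.not_true, Bool.not_false,
      if_true, if_false, and_true, and_false, false_and, true_and, false_or, or_false,
      or_self, Bool.false_eq_true, Bool.true_eq_false]
  · simp [mul_comm]
  · constructor
    · intro hh
      have : g = g⁻¹ := mul_right_cancel (b := h) (by rw [hh, mul_comm])
      rw [pow_two]; nth_rewrite 2 [this]; exact mul_inv_cancel g
    · intro hg
      have : g = g⁻¹ := by rw [eq_inv_iff_mul_eq_one, ← pow_two]; exact hg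
      rw [← this, mul_comm]
  · constructor
    · intro hh
      have : h⁻¹ = h := mul_left_cancel (a := g) (by rw [hh, mul_comm])
      rw [pow_two]; nth_rewrite 1 [← this]; exact inv_mul_cancel h
    · intro hh2
      have : h = h⁻¹ := by rw [eq_inv_iff_mul_eq_one, ← pow_two]; exact hh2
      rw [← this, mul_comm]
  · constructor
    · intro hh
      rw [pow_two, pow_two]
      calc g * g = (g * h⁻¹) * (h * g) := by
            rw [mul_assoc, ← mul_assoc h⁻¹, inv_mul_cancel, one_mul]
        _ = (h * g⁻¹) * (h * g) := by rw [hh]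
        _ = h * h := by
            rw [mul_assoc, mul_comm h g, ← mul_assoc g⁻¹, inv_mul_cancel, one_mul]
    · intro hg
      rw [pow_two, pow_two] at hg
      calc g * h⁻¹ = (g * g) * (g⁻¹ * h⁻¹) := by
            rw [mul_assoc g g, ← mul_assoc g g⁻¹, mul_inv_cancel, one_mul]
        _ = (h * h) * (g⁻¹ * h⁻¹) := by rw [hg]
        _ = h * g⁻¹ := by
            rw [mul_comm g⁻¹ h⁻¹, mul_assoc h h, ← mul_assoc h h⁻¹, mul_inv_cancel, one_mul]
end

section
/- Let G be a finite abelian group of order n, D(G) its generalized dihedral group (assumed non-abelian), \Gamma the commuting graph of D(G), and z = |{g \in G : g^2 = e}|. Then the number of edges of \Gamma satisfies 2|E(\Gamma)| = 3nz + n(n-2); equivalently, with z = 2^r, |E(\Gamma)| = 3n·2^{r-1} + n(n-2)/2. -/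
namespace GenDihedralAux

open Finset GenDihedral

variable {G : Type} [CommGroup G] [Fintype G] [DecidableEq G]

lemma adj_iff (u v : GenDihedral G) :
    (commGraph G).Adj u v ↔ u ≠ v ∧ u * v = v * u := Iff.rfl

lemma sum_genDihedral (f : GenDihedral G → ℕ) :
    ∑ v : GenDihedral G, f v = (∑ g : G, f ⟨g, false⟩) + ∑ g : G, f ⟨g, true⟩ := by
  let e : G × Bool ≃ GenDihedral G :=
    ⟨fun p => ⟨p.1, p.2⟩, fun x => (x.g, x.b), fun _ => rfl, fun _ => rfl⟩
  rw [← Fintype.sum_equiv e (fun p => f ⟨p.1, p.2⟩) f (fun p => rfl)]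
  rw [Fintype.sum_prod_type]
  simp only [Fintype.sum_bool]
  rw [Finset.sum_add_distrib, add_comm]

lemma card_filter_genDihedral (P : GenDihedral G → Prop) [DecidablePred P] :
    (univ.filter P).card
      = (univ.filter fun g : G => P ⟨g, false⟩).card
        + (univ.filter fun g : G => P ⟨g, true⟩).card := by
  simp only [Finset.card_filter]
  exact sum_genDihedral _

lemma degree_eq (v : GenDihedral G) :
    (commGraph G).degree v
      = (univ.filter fun g : G => (commGraph G).Adj v ⟨g, false⟩).card
        + (univ.filter fun g : G => (commGraph G).Adj v ⟨g, true⟩).card := by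
  rw [← SimpleGraph.card_neighborFinset_eq_degree, SimpleGraph.neighborFinset_eq_filter,
    card_filter_genDihedral]

lemma degree_false (g : G) :
    (commGraph G).degree ⟨g, false⟩
      = (Fintype.card G - 1) + (if g ^ 2 = 1 then Fintype.card G else 0) := by
  rw [degree_eq]
  have h1 : (univ.filter fun k : G => (commGraph G).Adj ⟨g, false⟩ ⟨k, false⟩)
      = univ.erase g := by
    ext k
    simp [adj_iff, GenDihedral.mul_def, GenDihedral.mk.injEq, mul_comm, eq_comm]
  have h2 : (univ.filter fun k : G => (commGraph G).Adj ⟨g, false⟩ ⟨k, true⟩)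
      = if g ^ 2 = 1 then univ else ∅ := by
    ext k
    have key : g * k = k * g⁻¹ ↔ g ^ 2 = 1 := by
      rw [mul_comm g k, mul_right_inj, eq_inv_iff_mul_eq_one, ← pow_two]
    simp [adj_iff, GenDihedral.mul_def, GenDihedral.mk.injEq, key]
    split <;> simp_all
  rw [h1, h2, Finset.card_erase_of_mem (mem_univ g), Finset.card_univ]
  split <;> simp

lemma degree_true (h : G) :
    (commGraph G).degree ⟨h, true⟩
      = (univ.filter fun g : G => g ^ 2 = 1).card
        + ((univ.filter fun g : G => g ^ 2 = 1).card - 1) := by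
  rw [degree_eq]
  have h1 : (univ.filter fun k : G => (commGraph G).Adj ⟨h, true⟩ ⟨k, false⟩)
      = univ.filter fun k : G => k ^ 2 = 1 := by
    ext k
    have key : h * k⁻¹ = k * h ↔ k ^ 2 = 1 := by
      rw [mul_comm k h, mul_right_inj, inv_eq_iff_mul_eq_one, ← pow_two]
    simp [adj_iff, GenDihedral.mul_def, GenDihedral.mk.injEq, key]
  have h2 : (univ.filter fun k : G => (commGraph G).Adj ⟨h, true⟩ ⟨k, true⟩)
      = (univ.filter fun k : G => k ^ 2 = h ^ 2).erase h := by
    ext k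
    have key : h * k⁻¹ = k * h⁻¹ ↔ k ^ 2 = h ^ 2 := by
      rw [← div_eq_mul_inv, ← div_eq_mul_inv, div_eq_div_iff_mul_eq_mul,
        pow_two, pow_two, eq_comm]
    simp only [mem_filter, mem_erase, mem_univ, true_and, and_true, adj_iff,
      GenDihedral.mul_def, GenDihedral.mk.injEq, ne_eq, if_true]
    rw [key]
    constructor <;> rintro ⟨a, b⟩ <;> exact ⟨fun e => a e.symm, b⟩
  have hfib : (univ.filter fun k : G => k ^ 2 = h ^ 2).card
      = (univ.filter fun k : G => k ^ 2 = 1).card := by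
    apply Finset.card_bij' (fun k _ => k * h⁻¹) (fun k _ => k * h)
    · intro k hk
      simp only [mem_filter, mem_univ, true_and] at hk ⊢
      rw [mul_pow, hk, inv_pow, mul_inv_cancel]
    · intro k hk
      simp only [mem_filter, mem_univ, true_and] at hk ⊢
      rw [mul_pow, hk, one_mul]
    · intro k _; group
    · intro k _; group
  rw [h1, h2, Finset.card_erase_of_mem, hfib]
  simp

end GenDihedralAux

open GenDihedral in
/-- The number of edges of the commuting graph of a non-abelian `D(G)`, where
`n = |G|` and `z = |{g : g² = e}|`, satisfies `2|E(Γ)| = 3nz + n(n-2)`. -/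
theorem stmt8 {G : Type} [CommGroup G] [Fintype G] [DecidableEq G]
    (hna : ∃ g : G, g ^ 2 ≠ 1) (n z : ℕ) (hn : n = Fintype.card G)
    (hz : z = (Finset.univ.filter fun g : G => g ^ 2 = 1).card) :
    2 * (commGraph G).edgeFinset.card = 3 * n * z + n * (n - 2) := by
  classical
  obtain ⟨g₀, hg₀⟩ := hna
  have hn2 : 2 ≤ n := by
    rw [hn]
    have : Nontrivial G := ⟨g₀, 1, fun e => hg₀ (by rw [e]; simp)⟩
    exact Fintype.one_lt_card
  have hz1 : 1 ≤ z := by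
    rw [hz]
    exact Finset.card_pos.mpr ⟨1, by simp⟩
  have hsum := (commGraph G).sum_degrees_eq_twice_card_edges
  rw [GenDihedralAux.sum_genDihedral] at hsum
  have hf : ∑ g : G, (commGraph G).degree ⟨g, false⟩ = n * (n - 1) + n * z := by
    calc ∑ g : G, (commGraph G).degree ⟨g, false⟩
        = ∑ g : G, ((Fintype.card G - 1) + (if g ^ 2 = 1 then Fintype.card G else 0)) := by
          exact Finset.sum_congr rfl fun g _ => GenDihedralAux.degree_false g
      _ = n * (n - 1) + n * z := by
          rw [Finset.sum_add_distrib, Finset.sum_const, Finset.card_univ,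
            ← Finset.sum_filter, Finset.sum_const]
          rw [hn, hz, smul_eq_mul, smul_eq_mul, mul_comm (Finset.filter _ _).card]
  have ht : ∑ g : G, (commGraph G).degree ⟨g, true⟩ = n * (z + (z - 1)) := by
    calc ∑ g : G, (commGraph G).degree ⟨g, true⟩
        = ∑ _g : G, ((Finset.univ.filter fun g : G => g ^ 2 = 1).card
            + ((Finset.univ.filter fun g : G => g ^ 2 = 1).card - 1)) := by
          exact Finset.sum_congr rfl fun g _ => GenDihedralAux.degree_true g
      _ = n * (z + (z - 1)) := by
          rw [Finset.sum_const, Finset.card_univ, smul_eq_mul, hn, hz]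
  rw [hf, ht] at hsum
  rw [← hsum]
  zify [hz1, hn2, show 1 ≤ n from le_trans one_le_two hn2]
  ring
end

section
/- Let G be a finite abelian group of order n, D(G) its generalized dihedral group (assumed non-abelian), and \Gamma the commuting graph of D(G). Then the chromatic number of \Gamma equals n. -/
open GenDihedral in
/-- The chromatic number of the commuting graph of a non-abelian `D(G)` equals `n = |G|`. -/
theorem stmt9 {G : Type} [CommGroup G] [Fintype G] (hna : ∃ g : G, g ^ 2 ≠ 1) :
    (commGraph G).chromaticNumber = (Fintype.card G : ℕ∞) := by
  classical
  obtain ⟨g₀, hg₀⟩ := hna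
  rw [pow_two] at hg₀
  have sq : ∀ x y : G, (x * y) * (x * y) = (x * x) * (y * y) := fun x y => by
    rw [mul_mul_mul_comm]
  -- Upper bound: a proper coloring with colors in G
  have hcol : (commGraph G).Colorable (Fintype.card G) := by
    refine (SimpleGraph.Coloring.mk
      (fun x => if x.b then (if x.g * x.g = 1 then x.g * g₀ else x.g) else x.g)
      ?_).colorable
    rintro ⟨a, ba⟩ ⟨c, bc⟩ ⟨hne, hcomm⟩
    simp only [ne_eq, GenDihedral.ext_iff, not_and] at hne
    cases ba <;> cases bc <;>
      simp only [mul_def, GenDihedral.ext_iff, Bool.false_eq_true, if_false, if_true,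
        Bool.xor_false, Bool.xor_true, Bool.false_xor, Bool.true_xor, Bool.not_false,
        Bool.not_true, and_true, true_and, and_self] at hcomm ⊢
    · -- both rotations
      exact fun h => hne h rfl
    · -- rotation a, reflection c : a*c = c*a⁻¹ forces a² = 1
      have h1 : a * c = c * a⁻¹ := hcomm
      rw [mul_comm c a⁻¹] at h1
      have ha : a * a = 1 := mul_eq_one_iff_eq_inv.mpr (mul_right_cancel h1)
      split_ifs with hc
      · intro h
        apply hg₀
        have hg : g₀ = c⁻¹ * a := by rw [h]; group
        rw [hg, sq, ha, mul_one, ← mul_inv, hc, inv_one]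
      · intro h; subst h; exact hc ha
    · -- reflection a, rotation c : a*c⁻¹ = c*a forces c² = 1
      have h1 : a * c⁻¹ = c * a := hcomm
      rw [mul_comm c a] at h1
      have hc2 : c * c = 1 := mul_eq_one_iff_eq_inv.mpr (mul_left_cancel h1).symm
      split_ifs with hA
      · intro h
        apply hg₀
        have hg : g₀ = a⁻¹ * c := by rw [← h]; group
        rw [hg, sq, hc2, mul_one, ← mul_inv, hA, inv_one]
      · intro h; subst h; exact hA hc2
    · -- two reflections: a*c⁻¹ = c*a⁻¹ forces a² = c²
      have h1 : a * c⁻¹ = c * a⁻¹ := hcomm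
      have hsq : a * a = c * c := by
        have h2 : a * c⁻¹ * (c * a) = c * a⁻¹ * (c * a) := by rw [h1]
        calc a * a = a * c⁻¹ * (c * a) := by group
          _ = c * a⁻¹ * (c * a) := h2
          _ = c * c := by rw [mul_comm c a]; group
      have hac : a ≠ c := fun h => hne h rfl
      by_cases hA : a * a = 1
      · have hC : c * c = 1 := hsq ▸ hA
        simp only [hA, hC, if_true]
        exact fun h => hac (mul_right_cancel h)
      · have hC : ¬ c * c = 1 := fun h => hA (hsq.trans h)
        simp only [hA, hC, if_false]
        exact hac
  -- Lower bound: the rotations form a clique of size |G|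
  have hclique : (commGraph G).IsClique
      ((Finset.univ.image (fun g : G => (⟨g, false⟩ : GenDihedral G))) : Finset _) := by
    intro x hx y hy hxy
    simp only [Finset.coe_image, Finset.coe_univ, Set.image_univ, Set.mem_range] at hx hy
    obtain ⟨a, rfl⟩ := hx; obtain ⟨c, rfl⟩ := hy
    exact ⟨hxy, by simp [mul_def, mul_comm]⟩
  have hcard : (Finset.univ.image (fun g : G => (⟨g, false⟩ : GenDihedral G))).card
      = Fintype.card G := by
    rw [Finset.card_image_of_injective _ (fun a c h => by simpa [GenDihedral.ext_iff] using h)]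
    simp
  have hle := hclique.card_le_chromaticNumber
  rw [hcard] at hle
  exact le_antisymm hcol.chromaticNumber_le hle
end

section
/- Let G be a finite abelian group of order n, D(G) its generalized dihedral group (assumed non-abelian), \Gamma the commuting graph of D(G), and z = |{g \in G : g^2 = e}|. For every vertex v \in \Omega_1 = Z(D(G)) = {(g,1) : g^2 = e}, the detour eccentricity of v in \Gamma equals 2n - 1 if n/z < z, and equals n + z(z - 1) - 1 if n/z \ge z. -/
/-- The detour eccentricity of a vertex `v` in a graph `Γ`: the maximum length of a
simple path in `Γ` starting at `v` (equivalently, the maximum over all vertices `u`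
of the detour distance `d_D(v, u)`, the length of a longest simple `v-u` path). -/
noncomputable def detourEcc {V : Type} (Γ : SimpleGraph V) (v : V) : ℕ :=
  sSup {n : ℕ | ∃ u : V, ∃ p : Γ.Walk v u, p.IsPath ∧ p.length = n}

open List

section graphlem
variable {G : Type} [CommGroup G]

theorem aux_RF (a b : G) : (a * b = b * a⁻¹) ↔ a ^ 2 = 1 := by
  rw [mul_comm a b, mul_right_inj, pow_two, eq_inv_iff_mul_eq_one]

theorem aux_FF (a b : G) : (a * b⁻¹ = b * a⁻¹) ↔ a ^ 2 = b ^ 2 := by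
  rw [pow_two, pow_two, mul_inv_eq_iff_eq_mul, mul_comm b a⁻¹, mul_assoc,
    eq_inv_mul_iff_mul_eq]

theorem mk_RR (a b : G) :
    (⟨a, false⟩ : GenDihedral G) * ⟨b, false⟩ = ⟨a * b, false⟩ := rfl

theorem mk_RF (a b : G) :
    (⟨a, false⟩ : GenDihedral G) * ⟨b, true⟩ = ⟨a * b, true⟩ := rfl

theorem mk_FR (a b : G) :
    (⟨a, true⟩ : GenDihedral G) * ⟨b, false⟩ = ⟨a * b⁻¹, true⟩ := rfl

theorem mk_FF (a b : G) :
    (⟨a, true⟩ : GenDihedral G) * ⟨b, true⟩ = ⟨a * b⁻¹, false⟩ := rfl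

theorem comm_RR (a b : G) :
    (⟨a, false⟩ : GenDihedral G) * ⟨b, false⟩ = ⟨b, false⟩ * ⟨a, false⟩ := by
  rw [mk_RR, mk_RR, mul_comm]

theorem comm_RF {a : G} (ha : a ^ 2 = 1) (b : G) :
    (⟨a, false⟩ : GenDihedral G) * ⟨b, true⟩ = ⟨b, true⟩ * ⟨a, false⟩ := by
  rw [mk_RF, mk_FR]
  exact congrArg (fun g => (⟨g, true⟩ : GenDihedral G)) ((aux_RF a b).mpr ha)

theorem comm_FF {a b : G} (h : a ^ 2 = b ^ 2) :
    (⟨a, true⟩ : GenDihedral G) * ⟨b, true⟩ = ⟨b, true⟩ * ⟨a, true⟩ := by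
  rw [mk_FF, mk_FF]
  exact congrArg (fun g => (⟨g, false⟩ : GenDihedral G)) ((aux_FF a b).mpr h)

theorem comm_mixed {x y : GenDihedral G} (h : x * y = y * x) (hx : x.b = false)
    (hy : y.b = true) : x.g ^ 2 = 1 := by
  obtain ⟨a, xb⟩ := x; obtain ⟨b, yb⟩ := y
  simp only at hx hy; subst hx; subst hy
  rw [mk_RF, mk_FR] at h
  exact (aux_RF a b).mp (congrArg GenDihedral.g h)

theorem comm_FF' {x y : GenDihedral G} (h : x * y = y * x) (hx : x.b = true)
    (hy : y.b = true) : x.g ^ 2 = y.g ^ 2 := by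
  obtain ⟨a, xb⟩ := x; obtain ⟨b, yb⟩ := y
  simp only at hx hy; subst hx; subst hy
  rw [mk_FF, mk_FF] at h
  exact (aux_FF a b).mp (congrArg GenDihedral.g h)

-- adjacency consequences
theorem adj_mixed {x y : GenDihedral G} (h : (GenDihedral.commGraph G).Adj x y)
    (hx : x.b = false) (hy : y.b = true) : x.g ^ 2 = 1 :=
  comm_mixed h.2 hx hy

theorem adj_mixed' {x y : GenDihedral G} (h : (GenDihedral.commGraph G).Adj x y)
    (hx : x.b = true) (hy : y.b = false) : y.g ^ 2 = 1 :=
  comm_mixed h.2.symm hy hx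

theorem adj_FF {x y : GenDihedral G} (h : (GenDihedral.commGraph G).Adj x y)
    (hx : x.b = true) (hy : y.b = true) : x.g ^ 2 = y.g ^ 2 :=
  comm_FF' h.2 hx hy

end graphlem

section fiber
variable {G : Type} [CommGroup G] [Fintype G] [DecidableEq G]

theorem card_fiberG {s : G} (hs : ∃ a : G, a ^ 2 = s) :
    (Finset.univ.filter fun h : G => h ^ 2 = s).card
      = (Finset.univ.filter fun h : G => h ^ 2 = 1).card := by
  obtain ⟨a, ha⟩ := hs
  have himg : (Finset.univ.filter fun h : G => h ^ 2 = s)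
      = (Finset.univ.filter fun h : G => h ^ 2 = 1).image (fun g => a * g) := by
    ext h
    simp only [Finset.mem_filter, Finset.mem_univ, true_and, Finset.mem_image]
    constructor
    · intro hh
      refine ⟨a⁻¹ * h, ?_, by group⟩
      rw [mul_pow, hh, inv_pow, ha]
      simp
    · rintro ⟨g, hg, rfl⟩
      rw [mul_pow, hg, ha, mul_one]
  rw [himg, Finset.card_image_of_injective _ (mul_right_injective a)]

theorem card_Z_pos : 0 < (Finset.univ.filter fun h : G => h ^ 2 = 1).card := by
  refine Finset.card_pos.mpr ⟨1, ?_⟩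
  simp

theorem card_eq_mul (G : Type) [CommGroup G] [Fintype G] [DecidableEq G] :
    Fintype.card G = (Finset.univ.image fun g : G => g ^ 2).card
      * (Finset.univ.filter fun h : G => h ^ 2 = 1).card := by
  have h := Finset.card_eq_sum_card_image (fun g : G => g ^ 2) Finset.univ
  rw [Finset.card_univ] at h
  rw [h]
  rw [Finset.sum_congr rfl (fun s hs => ?_), Finset.sum_const, smul_eq_mul]
  obtain ⟨a, _, ha⟩ := Finset.mem_image.mp hs
  exact card_fiberG ⟨a, ha⟩

end fiber

section opener
variable {G : Type} [CommGroup G]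
open GenDihedral

theorem opener_aux :
    ∀ (l : List (GenDihedral G)), l.Chain' (commGraph G).Adj →
      ∀ x ∈ l, x.b = true →
        (∃ p ∈ l.zip l.tail, p.1.b = false ∧ p.2.b = true ∧ p.2.g ^ 2 = x.g ^ 2) ∨
          (∃ h : l ≠ [], (l.head h).b = true ∧ (l.head h).g ^ 2 = x.g ^ 2)
  | a :: t, hch, x, hx, hxb => by
    rcases List.mem_cons.mp hx with rfl | hx'
    · exact Or.inr ⟨by simp, hxb, rfl⟩
    · match t, hx' with
      | b :: t', hx' =>
        have hch' : (b :: t').Chain' (commGraph G).Adj := hch.tail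
        have hab : (commGraph G).Adj a b := List.isChain_cons_cons.mp hch |>.1
        have hsub : ∀ p ∈ (b :: t').zip t', p ∈ (a :: b :: t').zip (b :: t') := by
          intro p hp
          simp only [List.zip_cons_cons, List.mem_cons]
          right; exact hp
        rcases opener_aux (b :: t') hch' x hx' hxb with ⟨p, hp, h1, h2, h3⟩ | ⟨_, hb, hs⟩
        · exact Or.inl ⟨p, hsub p hp, h1, h2, h3⟩
        · simp only [List.head_cons] at hb hs
          cases hab' : a.b with
          | false =>
            refine Or.inl ⟨(a, b), ?_, hab', hb, hs⟩
            simp [List.zip_cons_cons]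
          | true =>
            refine Or.inr ⟨by simp, hab', ?_⟩
            simp only [List.head_cons]
            rw [adj_FF hab hab' hb, hs]

end opener
section lists
variable {α : Type*}

theorem countP_split (p q : α → Bool) (l : List α) :
    countP p l = countP (fun a => p a && q a) l + countP (fun a => p a && !q a) l := by
  induction l with
  | nil => simp
  | cons a l ih =>
    simp only [countP_cons, ih]
    cases p a <;> cases q a <;> simp <;> omega

theorem chain'_zip {R : α → α → Prop} :
    ∀ (l : List α), l.Chain' R → ∀ p ∈ l.zip l.tail, R p.1 p.2
  | [], _, p, hp => by simp at hp
  | [x], _, p, hp => by simp at hp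
  | x :: y :: t, h, p, hp => by
    replace h := List.isChain_cons_cons.mp h
    simp only [List.tail_cons, List.zip_cons_cons, List.mem_cons] at hp
    rcases hp with rfl | hp
    · exact h.1
    · exact chain'_zip (y :: t) h.2 p (by simpa using hp)

theorem map_fst_zip_tail :
    ∀ (l : List α), (l.zip l.tail).map Prod.fst = l.dropLast
  | [] => rfl
  | [x] => rfl
  | x :: y :: t => by
    have := map_fst_zip_tail (y :: t)
    simp only [List.tail_cons] at this
    simp only [List.tail_cons, List.zip_cons_cons, List.map_cons, this]
    rw [List.dropLast_cons₂]

theorem map_snd_zip_tail (l : List α) : (l.zip l.tail).map Prod.snd = l.tail :=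
  List.map_snd_zip (by cases l <;> simp)

theorem openclose (q : α → Bool) :
    ∀ (x : α) (l : List α),
      countP (fun p => !q p.1 && q p.2) ((x :: l).zip l) + (if q x then 1 else 0)
        = countP (fun p => q p.1 && !q p.2) ((x :: l).zip l)
            + (if q ((x :: l).getLast (List.cons_ne_nil x l)) then 1 else 0)
  | x, [] => by simp; congr
  | x, y :: t => by
    have ih := openclose q y t
    have hgl : (x :: y :: t).getLast (List.cons_ne_nil _ _) = (y :: t).getLast (List.cons_ne_nil _ _) :=
      List.getLast_cons (by simp)
    simp only [List.zip_cons_cons, countP_cons, hgl] at *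
    cases hx : q x <;> cases hy : q y <;> simp [hx, hy] at ih ⊢ <;> omega

theorem no_prop (q : α → Bool) :
    ∀ (x : α) (l : List α), (∀ p ∈ (x :: l).zip l, q p.2 = true → q p.1 = true) →
      q x = false → ∀ a ∈ x :: l, q a = false
  | x, [], _, hx, a, ha => by
    rcases List.mem_cons.mp ha with rfl | h
    · exact hx
    · simp at h
  | x, y :: t, H, hx, a, ha => by
    have hy : q y = false := by
      by_contra h
      have := H (x, y) (by simp) (by simpa using Bool.of_not_eq_false h)
      rw [hx] at this; exact Bool.false_ne_true this
    rcases List.mem_cons.mp ha with rfl | ha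
    · exact hx
    · exact no_prop q y t (fun p hp => H p (by simp [List.zip_cons_cons]; right; exact hp)) hy a ha

theorem exists_walk_support {V : Type*} (Γ : SimpleGraph V) :
    ∀ (x : V) (l : List V), List.Chain Γ.Adj x l →
      ∃ u, ∃ p : Γ.Walk x u, p.support = x :: l
  | x, [], _ => ⟨x, SimpleGraph.Walk.nil, by simp⟩
  | x, y :: t, h => by
    replace h := List.isChain_cons_cons.mp h
    obtain ⟨u, p, hp⟩ := exists_walk_support Γ y t h.2
    exact ⟨u, SimpleGraph.Walk.cons h.1 p, by simp [hp]⟩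

theorem chain'_of_chain'_of_nodup {R S : α → α → Prop} {l : List α}
    (h1 : l.Chain' R) (h2 : l.Nodup) (h : ∀ a b, a ≠ b → R a b → S a b) :
    l.Chain' S := by
  replace h1 := List.isChain_iff_getElem.mp h1
  refine List.isChain_iff_getElem.mpr ?_
  intro i hi
  refine h _ _ ?_ (h1 i hi)
  intro he
  have := (List.Nodup.getElem_inj_iff h2).mp he
  simp at this

end lists

section upper
variable {G : Type} [CommGroup G] [Fintype G] [DecidableEq G]
open GenDihedral

/-- central / noncentral-rotation / reflection indicators -/
def fC (x : GenDihedral G) : Bool := !x.b && decide (x.g ^ 2 = 1)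
def fN (x : GenDihedral G) : Bool := !x.b && !decide (x.g ^ 2 = 1)

theorem fC_eq_true {x : GenDihedral G} : fC x = true ↔ x.b = false ∧ x.g ^ 2 = 1 := by
  simp [fC]

theorem fN_eq_true {x : GenDihedral G} : fN x = true ↔ x.b = false ∧ x.g ^ 2 ≠ 1 := by
  simp [fN]

theorem upper_count (v : GenDihedral G) (hvb : v.b = false) (hvg : v.g ^ 2 = 1)
    (tl : List (GenDihedral G)) (hch : (v :: tl).Chain' (commGraph G).Adj)
    (hnd : (v :: tl).Nodup) :
    (v :: tl).length ≤ Fintype.card G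
      + (Finset.univ.filter fun h : G => h ^ 2 = 1).card
        * ((Finset.univ.filter fun h : G => h ^ 2 = 1).card - 1)
      ∨ ((v :: tl).length ≤ (Finset.univ.filter fun h : G => h ^ 2 = 1).card
          + (Finset.univ.filter fun h : G => h ^ 2 = 1).card
            * (Finset.univ.filter fun h : G => h ^ 2 = 1).card) := by
  set zc := (Finset.univ.filter fun h : G => h ^ 2 = 1).card with hzc
  set P := (v :: tl).zip tl with hP
  set cF := countP (fun x : GenDihedral G => x.b) (v :: tl) with hcF
  set cC := countP (fun x : GenDihedral G => fC x) (v :: tl) with hcC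
  set cN := countP (fun x : GenDihedral G => fN x) (v :: tl) with hcN
  have hfCv : fC v = true := by simp [fC, hvb, hvg]
  have hfNv : fN v = false := by simp [fN, hvb, hvg]
  have hPadj : ∀ p ∈ P, (commGraph G).Adj p.1 p.2 := by
    have := chain'_zip (v :: tl) hch
    simpa using this
  -- total length split
  have hlen : (v :: tl).length = cF + cC + cN := by
    have h0 := countP_split (fun _ : GenDihedral G => true) (fun x => x.b) (v :: tl)
    have h1 := countP_split (fun x : GenDihedral G => !x.b)
      (fun x => decide (x.g ^ 2 = 1)) (v :: tl)
    have e0 : countP (fun a : GenDihedral G => true && !a.b) (v :: tl)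
        = countP (fun x : GenDihedral G => !x.b) (v :: tl) :=
      countP_congr (fun a _ => by simp)
    have e1 : countP (fun a : GenDihedral G => true && a.b) (v :: tl) = cF :=
      countP_congr (fun a _ => by simp)
    have e2 : countP (fun a : GenDihedral G => !a.b && decide (a.g ^ 2 = 1)) (v :: tl)
        = cC := countP_congr (fun a _ => by simp [fC])
    have e3 : countP (fun a : GenDihedral G => !a.b && !decide (a.g ^ 2 = 1)) (v :: tl)
        = cN := countP_congr (fun a _ => by simp [fN])
    rw [countP_true] at h0
    rw [e0, e1] at h0
    rw [e2, e3] at h1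
    omega
  -- last element bookkeeping
  have hne : (v :: tl) ≠ [] := List.cons_ne_nil v tl
  set lst := (v :: tl).getLast hne with hlst
  set endC : ℕ := if fC lst then 1 else 0 with hendC
  set endF : ℕ := if lst.b then 1 else 0 with hendF
  have hends : endC + endF ≤ 1 := by
    by_cases h : lst.b = true <;> simp [hendC, hendF, fC, h] <;> split <;> simp
  -- first/second component central counts
  have hfst : countP (fun p : GenDihedral G × GenDihedral G => fC p.1) P + endC = cC := by
    have hm : P.map Prod.fst = (v :: tl).dropLast := by
      have := map_fst_zip_tail (v :: tl)
      simpa using this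
    have h1 : countP (fun p : GenDihedral G × GenDihedral G => fC p.1) P
        = countP fC ((v :: tl).dropLast) := by
      rw [← hm, countP_map]
      exact countP_congr (fun a _ => Iff.rfl)
    have h2 : countP fC ((v :: tl).dropLast) + endC = cC := by
      conv_rhs => rw [hcC, ← List.dropLast_append_getLast hne]
      rw [countP_append]
      simp [hendC, ← hlst, countP_cons]
    omega
  have hsnd : countP (fun p : GenDihedral G × GenDihedral G => fC p.2) P + 1 = cC := by
    have hm : P.map Prod.snd = tl := by
      have := map_snd_zip_tail (v :: tl)
      simpa using this
    have h1 : countP (fun p : GenDihedral G × GenDihedral G => fC p.2) P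
        = countP fC tl := by
      rw [← hm, countP_map]
      exact countP_congr (fun a _ => Iff.rfl)
    rw [h1, hcC, countP_cons, hfCv]
    simp
  -- pair class counts
  set nCC := countP (fun p : GenDihedral G × GenDihedral G => fC p.1 && fC p.2) P
  set nCN := countP (fun p : GenDihedral G × GenDihedral G => fC p.1 && fN p.2) P
  set nNC := countP (fun p : GenDihedral G × GenDihedral G => fN p.1 && fC p.2) P
  set nCF := countP (fun p : GenDihedral G × GenDihedral G => fC p.1 && p.2.b) P
  set nFC := countP (fun p : GenDihedral G × GenDihedral G => p.1.b && fC p.2) P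
  set k := countP (fun p : GenDihedral G × GenDihedral G => !p.1.b && p.2.b) P with hk
  set k' := countP (fun p : GenDihedral G × GenDihedral G => p.1.b && !p.2.b) P with hk'
  have hNF : countP (fun p : GenDihedral G × GenDihedral G => fN p.1 && p.2.b) P = 0 := by
    rw [countP_eq_zero]
    intro p hp hcon
    rw [Bool.and_eq_true, fN_eq_true] at hcon
    exact hcon.1.2 (adj_mixed (hPadj p hp) hcon.1.1 hcon.2)
  have hFN : countP (fun p : GenDihedral G × GenDihedral G => p.1.b && fN p.2) P = 0 := by
    rw [countP_eq_zero]
    intro p hp hcon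
    rw [Bool.and_eq_true, fN_eq_true] at hcon
    exact hcon.2.2 (adj_mixed' (hPadj p hp) hcon.1 hcon.2.1)
  -- splitting the first/second central counts into classes
  have hsplit1 : countP (fun p : GenDihedral G × GenDihedral G => fC p.1) P
      = nCF + (nCC + nCN) := by
    rw [countP_split (fun p : GenDihedral G × GenDihedral G => fC p.1)
      (fun p => p.2.b) P]
    congr 1
    rw [countP_split (fun p : GenDihedral G × GenDihedral G => fC p.1 && !p.2.b)
      (fun p => decide (p.2.g ^ 2 = 1)) P]
    congr 1
    · exact countP_congr (fun a _ => by simp [fC, Bool.and_assoc])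
    · exact countP_congr (fun a _ => by simp [fN, Bool.and_assoc])
  have hsplit2 : countP (fun p : GenDihedral G × GenDihedral G => fC p.2) P
      = nFC + (nCC + nNC) := by
    rw [countP_split (fun p : GenDihedral G × GenDihedral G => fC p.2)
      (fun p => p.1.b) P]
    congr 1
    · exact countP_congr (fun a _ => by rw [Bool.and_comm])
    rw [countP_split (fun p : GenDihedral G × GenDihedral G => fC p.2 && !p.1.b)
      (fun p => decide (p.1.g ^ 2 = 1)) P]
    congr 1
    · exact countP_congr (fun a _ => by simp only [fC, fN]; cases a.1.b <;> cases a.2.b <;> cases h1 : decide (a.1.g ^ 2 = 1) <;> cases h2 : decide (a.2.g ^ 2 = 1) <;> simp)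
    · exact countP_congr (fun a _ => by simp only [fC, fN]; cases a.1.b <;> cases a.2.b <;> cases h1 : decide (a.1.g ^ 2 = 1) <;> cases h2 : decide (a.2.g ^ 2 = 1) <;> simp)
  -- k and k' in terms of classes
  have hkk : k = nCF := by
    rw [hk, countP_split (fun p : GenDihedral G × GenDihedral G => !p.1.b && p.2.b)
      (fun p => decide (p.1.g ^ 2 = 1)) P]
    have z1 : countP (fun a : GenDihedral G × GenDihedral G =>
        (!a.1.b && a.2.b) && !decide (a.1.g ^ 2 = 1)) P = 0 := by
      rw [← hNF]
      exact countP_congr (fun a _ => by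
        simp only [fN]
        rw [Bool.and_comm (!a.1.b) a.2.b, Bool.and_assoc, Bool.and_comm a.2.b])
    rw [z1, add_zero]
    exact countP_congr (fun a _ => by
      simp only [fC]
      rw [Bool.and_comm (!a.1.b) a.2.b, Bool.and_assoc, Bool.and_comm a.2.b])
  have hkk' : k' = nFC := by
    rw [hk', countP_split (fun p : GenDihedral G × GenDihedral G => p.1.b && !p.2.b)
      (fun p => decide (p.2.g ^ 2 = 1)) P]
    have z1 : countP (fun a : GenDihedral G × GenDihedral G =>
        (a.1.b && !a.2.b) && !decide (a.2.g ^ 2 = 1)) P = 0 := by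
      rw [← hFN]
      exact countP_congr (fun a _ => by simp only [fN, Bool.and_assoc])
    rw [z1, add_zero]
    exact countP_congr (fun a _ => by simp only [fC, Bool.and_assoc])
  -- open/close balance
  have hoc : k + 0 = k' + endF := by
    have h := openclose (fun x : GenDihedral G => x.b) v tl
    rw [hvb] at h
    simpa [hendF, hlst, ← hP, ← hk, ← hk'] using h
  -- reflections bound : cF ≤ k * zc
  have hopen : ∀ x ∈ v :: tl, x.b = true →
      ∃ p ∈ P, p.1.b = false ∧ p.2.b = true ∧ p.2.g ^ 2 = x.g ^ 2 := by
    intro x hx hxb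
    rcases opener_aux (v :: tl) hch x hx hxb with h | ⟨h, hb, _⟩
    · simpa using h
    · rw [List.head_cons, hvb] at hb
      exact absurd hb (by simp)
  have hcFbound : cF ≤ k * zc := by
    classical
    set T := ((v :: tl).filter (fun x : GenDihedral G => x.b)).toFinset with hT
    have hTcard : T.card = cF := by
      rw [hT, List.toFinset_card_of_nodup (hnd.filter _), hcF, countP_eq_length_filter]
    set SqF := T.image (fun x : GenDihedral G => x.g ^ 2) with hSqF
    have hfib : ∀ s ∈ SqF,
        (Finset.univ.filter fun x : GenDihedral G => x.b = true ∧ x.g ^ 2 = s).card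
          = zc := by
      intro s hs
      obtain ⟨x, hxT, rfl⟩ := Finset.mem_image.mp hs
      have himg : (Finset.univ.filter fun y : GenDihedral G =>
            y.b = true ∧ y.g ^ 2 = x.g ^ 2)
          = (Finset.univ.filter fun h : G => h ^ 2 = x.g ^ 2).image
              (fun h => (⟨h, true⟩ : GenDihedral G)) := by
        ext ⟨g, b⟩
        simp only [Finset.mem_filter, Finset.mem_univ, true_and, Finset.mem_image,
          GenDihedral.mk.injEq]
        constructor
        · rintro ⟨rfl, hg⟩; exact ⟨g, hg, rfl, rfl⟩
        · rintro ⟨h, hh, rfl, rfl⟩; exact ⟨rfl, hh⟩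
      rw [himg, Finset.card_image_of_injective _
        (fun h1 h2 e => (GenDihedral.mk.injEq _ _ _ _).mp e |>.1)]
      exact card_fiberG ⟨x.g, rfl⟩
    have hsub : T ⊆ SqF.biUnion (fun s =>
        Finset.univ.filter fun x : GenDihedral G => x.b = true ∧ x.g ^ 2 = s) := by
      intro x hx
      have hx' := List.mem_toFinset.mp hx
      have hxl := List.mem_of_mem_filter hx'
      have hxb : x.b = true := by
        have := List.of_mem_filter hx'
        simpa using this
      refine Finset.mem_biUnion.mpr ⟨x.g ^ 2, Finset.mem_image_of_mem _ hx, ?_⟩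
      simp [hxb]
    have h1 : cF ≤ SqF.card * zc := by
      calc cF = T.card := hTcard.symm
        _ ≤ (SqF.biUnion _).card := Finset.card_le_card hsub
        _ ≤ ∑ s ∈ SqF, (Finset.univ.filter
              fun x : GenDihedral G => x.b = true ∧ x.g ^ 2 = s).card :=
            Finset.card_biUnion_le
        _ = ∑ _s ∈ SqF, zc := Finset.sum_congr rfl hfib
        _ = SqF.card * zc := by rw [Finset.sum_const, smul_eq_mul]
    have h2 : SqF.card ≤ k := by
      have hsub2 : SqF ⊆ ((P.filter (fun p => !p.1.b && p.2.b)).map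
          (fun p => p.2.g ^ 2)).toFinset := by
        intro s hs
        obtain ⟨x, hxT, rfl⟩ := Finset.mem_image.mp hs
        have hx' := List.mem_toFinset.mp hxT
        have hxl := List.mem_of_mem_filter hx'
        have hxb : x.b = true := by
          have := List.of_mem_filter hx'
          simpa using this
        obtain ⟨p, hp, h1b, h2b, h3⟩ := hopen x hxl hxb
        refine List.mem_toFinset.mpr (List.mem_map.mpr ⟨p, ?_, h3⟩)
        refine List.mem_filter.mpr ⟨hp, by simp [h1b, h2b]⟩
      calc SqF.card ≤ _ := Finset.card_le_card hsub2
        _ ≤ ((P.filter (fun p => !p.1.b && p.2.b)).map (fun p => p.2.g ^ 2)).length :=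
            List.toFinset_card_le _
        _ = k := by rw [List.length_map, ← countP_eq_length_filter, hk]
    calc cF ≤ SqF.card * zc := h1
      _ ≤ k * zc := Nat.mul_le_mul_right _ h2
  -- rotations bound
  have hrotbound : cC + cN ≤ Fintype.card G := by
    classical
    set TR := ((v :: tl).filter (fun x : GenDihedral G => !x.b)).toFinset with hTR
    have hTRcard : TR.card = cC + cN := by
      rw [hTR, List.toFinset_card_of_nodup (hnd.filter _), ← countP_eq_length_filter]
      have h1 := countP_split (fun x : GenDihedral G => !x.b)
        (fun x => decide (x.g ^ 2 = 1)) (v :: tl)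
      have e2 : countP (fun a : GenDihedral G => !a.b && decide (a.g ^ 2 = 1)) (v :: tl)
          = cC := countP_congr (fun a _ => by simp [fC])
      have e3 : countP (fun a : GenDihedral G => !a.b && !decide (a.g ^ 2 = 1)) (v :: tl)
          = cN := countP_congr (fun a _ => by simp [fN])
      rw [e2, e3] at h1
      exact h1
    rw [← hTRcard, ← Finset.card_univ]
    refine Finset.card_le_card_of_injOn (fun x => x.g) (fun _ _ => Finset.mem_univ _) ?_
    intro x hx y hy he
    have hxb : x.b = false := by
      have := List.of_mem_filter (List.mem_toFinset.mp hx); simpa using this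
    have hyb : y.b = false := by
      have := List.of_mem_filter (List.mem_toFinset.mp hy); simpa using this
    exact GenDihedral.ext he (hxb.trans hyb.symm)
  have hcCbound : cC ≤ zc := by
    classical
    set TC := ((v :: tl).filter (fun x : GenDihedral G => fC x)).toFinset with hTC
    have hTCcard : TC.card = cC := by
      rw [hTC, List.toFinset_card_of_nodup (hnd.filter _), hcC, countP_eq_length_filter]
    rw [← hTCcard, hzc]
    refine Finset.card_le_card_of_injOn (fun x => x.g) ?_ ?_
    · intro x hx
      have := fC_eq_true.mp (List.of_mem_filter (List.mem_toFinset.mp hx))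
      simp [this.2]
    · intro x hx y hy he
      have hxb := (fC_eq_true.mp (List.of_mem_filter (List.mem_toFinset.mp hx))).1
      have hyb := (fC_eq_true.mp (List.of_mem_filter (List.mem_toFinset.mp hy))).1
      exact GenDihedral.ext he (hxb.trans hyb.symm)
  -- final case analysis
  by_cases hcase : k + 1 ≤ cC
  · left
    have h1 : cF ≤ (zc - 1) * zc :=
      le_trans hcFbound (Nat.mul_le_mul_right _ (by omega))
    have h2 : (zc - 1) * zc = zc * (zc - 1) := Nat.mul_comm _ _
    omega
  · right
    -- degenerate case : k = cC, no noncentral rotations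
    have key : nCN = 0 ∧ nNC = 0 ∧ k = cC := by omega
    have hcN0 : cN = 0 := by
      have hprop : ∀ a ∈ v :: tl, fN a = false := by
        refine no_prop fN v tl ?_ hfNv
        intro p hp h2
        by_contra h1
        have h1' : fN p.1 = false := Bool.eq_false_iff.mpr h1
        have hadj := hPadj p (by exact hp)
        have h2' := fN_eq_true.mp h2
        cases h1b : p.1.b with
        | true => exact h2'.2 (adj_mixed' hadj h1b h2'.1)
        | false =>
          have hfc : fC p.1 = true := by
            simp only [fN, h1b, Bool.not_false, Bool.true_and] at h1'
            have hg : p.1.g ^ 2 = 1 := by simpa using h1'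
            simp [fC, h1b, hg]
          have := countP_eq_zero.mp key.1 p (by exact hp)
          rw [Bool.and_eq_true] at this
          exact this ⟨hfc, h2⟩
      rw [hcN, countP_eq_zero]
      intro a ha
      rw [hprop a ha]
      simp
    have h1 : cF ≤ zc * zc := by
      calc cF ≤ k * zc := hcFbound
        _ = cC * zc := by rw [key.2.2]
        _ ≤ zc * zc := Nat.mul_le_mul_right _ hcCbound
    omega

end upper

section construct
variable {G : Type} [CommGroup G] [Fintype G] [DecidableEq G]
open GenDihedral

def Rr (g : G) : GenDihedral G := ⟨g, false⟩
def Ff (g : G) : GenDihedral G := ⟨g, true⟩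

noncomputable def fibL (s : G) : List G := (Finset.univ.filter fun h : G => h ^ 2 = s).toList

noncomputable def blk (s c : G) : List (GenDihedral G) := (fibL s).map Ff ++ [Rr c]

def CommR (x y : GenDihedral G) : Prop := x * y = y * x

theorem chainR : ∀ (x : G) (l : List G), List.Chain CommR (Rr x) (l.map Rr)
  | _, [] => List.Chain.nil
  | x, y :: t => List.Chain.cons (comm_RR x y) (chainR y t)

theorem mem_fibL {s h : G} (hh : h ∈ fibL s) : h ^ 2 = s := by
  have := Finset.mem_toList.mp hh
  exact (Finset.mem_filter.mp this).2

theorem chainF_from {s c : G} (hc : c ^ 2 = 1) :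
    ∀ (l : List G), (∀ h ∈ l, h ^ 2 = s) →
      ∀ x : GenDihedral G, ((x.b = true ∧ x.g ^ 2 = s) ∨ (x.b = false ∧ x.g ^ 2 = 1)) →
        List.Chain CommR x (l.map Ff ++ [Rr c])
  | [], _, x, hx => by
    refine List.Chain.cons ?_ List.Chain.nil
    obtain ⟨a, ab⟩ := x
    rcases hx with ⟨hb, hs⟩ | ⟨hb, hs⟩ <;> simp only at hb <;> subst hb
    · exact (comm_RF hc a).symm
    · exact comm_RR a c
  | h :: l, hl, x, hx => by
    refine List.Chain.cons ?_
      (chainF_from hc l (fun h' hh' => hl h' (List.mem_cons_of_mem _ hh'))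
        (Ff h) (Or.inl ⟨rfl, hl h (List.mem_cons_self)⟩))
    obtain ⟨a, ab⟩ := x
    rcases hx with ⟨hb, hs⟩ | ⟨hb, hs⟩ <;> simp only at hb <;> subst hb
    · exact comm_FF (hs.trans (hl h (List.mem_cons_self)).symm)
    · exact comm_RF hs h

theorem chain_main (tailL : List G) :
    ∀ (sl csl : List G), (∀ c ∈ csl, c ^ 2 = 1) →
      ∀ x : G, x ^ 2 = 1 →
        List.Chain CommR (Rr x) ((List.zipWith blk sl csl).flatten ++ tailL.map Rr)
  | [], csl, _, x, _ => by simpa using chainR x tailL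
  | s :: sl', [], _, x, _ => by simpa using chainR x tailL
  | s :: sl', c :: csl', hcs, x, hx => by
    have hsplit : ((List.zipWith blk (s :: sl') (c :: csl')).flatten
          ++ tailL.map Rr)
        = (fibL s).map Ff ++ (Rr c :: ((List.zipWith blk sl' csl').flatten
            ++ tailL.map Rr)) := by
      simp [blk, List.zipWith_cons_cons, List.flatten, List.append_assoc]
    rw [hsplit]
    refine List.isChain_cons_split.mpr ?_
    constructor
    · exact chainF_from (hcs c (List.mem_cons_self)) (fibL s)
        (fun h hh => mem_fibL hh) (Rr x) (Or.inr ⟨rfl, hx⟩)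
    · exact chain_main tailL sl' csl'
        (fun c' hc' => hcs c' (List.mem_cons_of_mem _ hc')) c
        (hcs c (List.mem_cons_self))

theorem join_zip_perm :
    ∀ (sl csl : List G), sl.length = csl.length →
      ((List.zipWith blk sl csl).flatten).Perm
        ((sl.flatMap fibL).map Ff ++ csl.map Rr)
  | [], [], _ => by simp
  | [], _ :: _, h => by simp at h
  | _ :: _, [], h => by simp at h
  | s :: sl', c :: csl', h => by
    have ih := join_zip_perm sl' csl' (by simpa using h)
    calc (List.zipWith blk (s :: sl') (c :: csl')).flatten
        = (fibL s).map Ff ++ ([Rr c]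
            ++ (List.zipWith blk sl' csl').flatten) := by
          simp [blk, List.append_assoc]
      _ ~ (fibL s).map Ff ++ ([Rr c] ++ ((sl'.flatMap fibL).map Ff ++ csl'.map Rr)) :=
          List.Perm.append_left _ (List.Perm.append_left _ ih)
      _ ~ ((s :: sl').flatMap fibL).map Ff ++ (c :: csl').map Rr := by
          simp only [List.flatMap_cons, List.map_append, List.map_cons,
            List.singleton_append, List.nil_append, List.append_assoc]
          exact List.Perm.append_left _ List.perm_middle.symm

end construct

section lowerpath
variable {G : Type} [CommGroup G] [Fintype G] [DecidableEq G]
open GenDihedral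

theorem lower_path (g0 : G) (hvg : g0 ^ 2 = 1) :
    ∃ u, ∃ p : (commGraph G).Walk (⟨g0, false⟩ : GenDihedral G) u, p.IsPath ∧
      p.length + 1 = Fintype.card G
        + (min (Finset.univ.image fun g : G => g ^ 2).card
             ((Finset.univ.filter fun h : G => h ^ 2 = 1).card - 1))
          * (Finset.univ.filter fun h : G => h ^ 2 = 1).card := by
  classical
  set Zs := (Finset.univ.filter fun h : G => h ^ 2 = 1) with hZs
  set zc := Zs.card with hzc
  set SQ := (Finset.univ.image fun g : G => g ^ 2) with hSQ
  set m := SQ.card with hm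
  set t := min m (zc - 1) with ht
  set cs : List G := (Zs.erase g0).toList with hcs
  set csT := cs.take t with hcsT
  set sl := SQ.toList.take t with hsl
  set ncl : List G := (Finset.univ.filter fun g : G => ¬ g ^ 2 = 1).toList with hncl
  set tailg : List G := cs.drop t ++ ncl with htailg
  set body := (List.zipWith blk sl csT).flatten ++ tailg.map Rr with hbody
  set L : List (GenDihedral G) := ⟨g0, false⟩ :: body with hL
  have hg0Z : g0 ∈ Zs := Finset.mem_filter.mpr ⟨Finset.mem_univ _, hvg⟩
  have hlencs : cs.length = zc - 1 := by
    rw [hcs, Finset.length_toList, Finset.card_erase_of_mem hg0Z]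
  have hzc1 : 1 ≤ zc := by
    rw [hzc]; exact Finset.card_pos.mpr ⟨g0, hg0Z⟩
  have htzc : t ≤ zc - 1 := min_le_right _ _
  have htm : t ≤ m := min_le_left _ _
  have hlensl : sl.length = t := by
    rw [hsl, List.length_take, Finset.length_toList, ← hm]
    omega
  have hlencsT : csT.length = t := by
    rw [hcsT, List.length_take, hlencs]
    omega
  have hcsmem : ∀ c ∈ cs, c ^ 2 = 1 := by
    intro c hc
    have := Finset.mem_erase.mp (Finset.mem_toList.mp hc)
    exact (Finset.mem_filter.mp this.2).2
  have hcsne : ∀ c ∈ cs, c ≠ g0 := by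
    intro c hc
    exact (Finset.mem_erase.mp (Finset.mem_toList.mp hc)).1
  have hnclmem : ∀ c ∈ ncl, ¬ c ^ 2 = 1 := by
    intro c hc
    exact (Finset.mem_filter.mp (Finset.mem_toList.mp hc)).2
  have hslmem : ∀ s ∈ sl, s ∈ SQ := by
    intro s hs
    exact Finset.mem_toList.mp (List.mem_of_mem_take hs)
  -- the chain
  have hchain : List.Chain CommR (Rr g0) body := by
    rw [hbody]
    exact chain_main tailg sl csT
      (fun c hc => hcsmem c (List.mem_of_mem_take hc)) g0 hvg
  have hchain' : L.Chain' CommR := hchain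
  -- the permutation to a canonical list
  have hperm : body.Perm ((sl.flatMap fibL).map Ff ++ (cs ++ ncl).map Rr) := by
    have h1 := join_zip_perm sl csT (by rw [hlensl, hlencsT])
    have h2 : body.Perm (((sl.flatMap fibL).map Ff ++ csT.map Rr) ++ tailg.map Rr) := by
      rw [hbody]
      exact h1.append_right _
    refine h2.trans ?_
    rw [List.append_assoc, ← List.map_append, htailg, ← List.append_assoc, hcsT,
      List.take_append_drop]
  have hpermL : L.Perm ((⟨g0, false⟩ : GenDihedral G)
      :: ((sl.flatMap fibL).map Ff ++ (cs ++ ncl).map Rr)) := hperm.cons _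
  -- nodup of the canonical list
  have hnodup : L.Nodup := by
    rw [hpermL.nodup_iff]
    refine List.nodup_cons.mpr ⟨?_, ?_⟩
    · intro hmem
      rcases List.mem_append.mp hmem with h | h
      · obtain ⟨a, _, ha⟩ := List.mem_map.mp h
        exact absurd (congrArg GenDihedral.b ha) (by simp [Ff])
      · obtain ⟨a, ha, ha2⟩ := List.mem_map.mp h
        have hag : a = g0 := by
          have := congrArg GenDihedral.g ha2
          simpa [Rr] using this
        subst hag
        rcases List.mem_append.mp ha with h' | h'
        · exact hcsne a h' rfl
        · exact hnclmem a h' hvg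
    · refine List.Nodup.append ?_ ?_ ?_
      · refine List.Nodup.map ?_ ?_
        · intro a b hab
          simpa [Ff] using congrArg GenDihedral.g hab
        · rw [List.nodup_flatMap]
          constructor
          · intro s _
            exact Finset.nodup_toList _
          · have hslnd : sl.Nodup := (SQ.nodup_toList).sublist (List.take_sublist _ _)
            refine List.Pairwise.imp ?_ hslnd
            intro s s' hss a ha ha'
            exact hss ((mem_fibL ha).symm.trans (mem_fibL ha'))
      · refine List.Nodup.map ?_ ?_
        · intro a b hab
          simpa [Rr] using congrArg GenDihedral.g hab
        · refine List.Nodup.append (Finset.nodup_toList _) (Finset.nodup_toList _) ?_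
          intro a ha ha'
          exact hnclmem a ha' (hcsmem a ha)
      · intro x hx hx'
        obtain ⟨a, _, ha⟩ := List.mem_map.mp hx
        obtain ⟨b, _, hb⟩ := List.mem_map.mp hx'
        have := (congrArg GenDihedral.b ha).trans (congrArg GenDihedral.b hb).symm
        simpa [Ff, Rr] using this
  -- length computation
  have hlenfib : (sl.flatMap fibL).length = t * zc := by
    rw [List.length_flatMap]
    have : sl.map (List.length ∘ fibL) = List.replicate t zc := by
      rw [List.eq_replicate_iff]
      refine ⟨by rw [List.length_map, hlensl], ?_⟩
      intro b hb
      obtain ⟨s, hs, rfl⟩ := List.mem_map.mp hb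
      obtain ⟨a, _, ha⟩ := Finset.mem_image.mp (hslmem s hs)
      simp only [Function.comp_apply]
      rw [fibL, Finset.length_toList, hzc, hZs]
      exact card_fiberG ⟨a, ha⟩
    change (sl.map (List.length ∘ fibL)).sum = t * zc
    rw [this, List.sum_replicate, smul_eq_mul]
  have hlenncl : zc + ncl.length = Fintype.card G := by
    rw [hncl, Finset.length_toList, hzc, hZs]
    rw [← Finset.card_univ]
    exact Finset.card_filter_add_card_filter_not _
  have hlenL : L.length = Fintype.card G + t * zc := by
    rw [hpermL.length_eq]
    simp only [List.length_cons, List.length_append, List.length_map]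
    rw [hlenfib, hlencs]
    omega
  -- build the walk
  have hchadj : L.Chain' (commGraph G).Adj := by
    refine chain'_of_chain'_of_nodup hchain' hnodup ?_
    intro a b hne hcomm
    exact ⟨hne, hcomm⟩
  obtain ⟨u, p, hsup⟩ := exists_walk_support (commGraph G) (⟨g0, false⟩ : GenDihedral G)
    body hchadj
  refine ⟨u, p, ?_, ?_⟩
  · rw [SimpleGraph.Walk.isPath_def, hsup, ← hL]
    exact hnodup
  · rw [← SimpleGraph.Walk.length_support, hsup, ← hL, hlenL]

end lowerpath

section cardlem
variable {G : Type} [CommGroup G] [Fintype G] [DecidableEq G]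

theorem cardD (G : Type) [CommGroup G] [Fintype G] :
    Fintype.card (GenDihedral G) = 2 * Fintype.card G := by
  rw [Fintype.card_congr
    (⟨fun x : GenDihedral G => (x.g, x.b), fun p => ⟨p.1, p.2⟩,
      fun _ => rfl, fun _ => rfl⟩ : GenDihedral G ≃ G × Bool)]
  rw [Fintype.card_prod, Fintype.card_bool, Nat.mul_comm]

end cardlem

open GenDihedral in
theorem stmt10' {G : Type} [CommGroup G] [Fintype G] [DecidableEq G]
    (hna : ∃ g : G, g ^ 2 ≠ 1) (n z : ℕ) (hn : n = Fintype.card G)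
    (hz : z = (Finset.univ.filter fun g : G => g ^ 2 = 1).card)
    (v : GenDihedral G) (hv : v.b = false ∧ v.g ^ 2 = 1) :
    detourEcc (commGraph G) v =
      if n / z < z then 2 * n - 1 else n + z * (z - 1) - 1 := by
  classical
  obtain ⟨hvb, hvg⟩ := hv
  subst hn; subst hz
  obtain ⟨g0, b0⟩ := v
  cases b0 with
  | true => exact absurd hvb (by simp)
  | false =>
  have hvg' : g0 ^ 2 = 1 := hvg
  obtain ⟨N, hNdef⟩ : ∃ x, x = Fintype.card G := ⟨_, rfl⟩
  obtain ⟨zc, hzc⟩ : ∃ x, x = (Finset.univ.filter fun g : G => g ^ 2 = 1).card :=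
    ⟨_, rfl⟩
  obtain ⟨m, hm⟩ : ∃ x, x = (Finset.univ.image fun g : G => g ^ 2).card := ⟨_, rfl⟩
  obtain ⟨t, ht⟩ : ∃ x, x = min m (zc - 1) := ⟨_, rfl⟩
  rw [← hNdef, ← hzc]
  have hzc1 : 1 ≤ zc := by
    rw [hzc]
    exact Finset.card_pos.mpr ⟨1, Finset.mem_filter.mpr ⟨Finset.mem_univ _, one_pow 2⟩⟩
  have hN : N = m * zc := by
    rw [hNdef, hzc, hm]; exact card_eq_mul G
  have hzcN : zc < N := by
    obtain ⟨g1, hg1⟩ := hna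
    rw [hzc, hNdef, ← Finset.card_univ]
    refine Finset.card_lt_card ⟨Finset.filter_subset _ _, fun hsub => ?_⟩
    exact hg1 (Finset.mem_filter.mp (hsub (Finset.mem_univ g1))).2
  have h2zc : 2 * zc ≤ N := by
    have hm2 : 2 ≤ m := by
      by_contra h
      have h1 : m * zc ≤ 1 * zc := Nat.mul_le_mul_right _ (by omega)
      rw [Nat.one_mul] at h1
      omega
    calc 2 * zc ≤ m * zc := Nat.mul_le_mul_right _ hm2
      _ = N := hN.symm
  have hdiv : N / zc = m := by
    rw [hN]
    exact Nat.mul_div_cancel m (Nat.lt_of_lt_of_le Nat.zero_lt_one hzc1)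
  have hmulc : (zc - 1) * zc = zc * (zc - 1) := Nat.mul_comm _ _
  have hsq : zc * zc = zc * (zc - 1) + zc := by
    obtain ⟨kk, hk⟩ : ∃ kk, zc = kk + 1 := ⟨zc - 1, by omega⟩
    rw [hk, Nat.succ_sub_one, Nat.mul_succ]
  -- the key identity
  have key : detourEcc (commGraph G) (⟨g0, false⟩ : GenDihedral G) = N + t * zc - 1 := by
    have hbdd : BddAbove {k : ℕ | ∃ u : GenDihedral G,
        ∃ p : (commGraph G).Walk ⟨g0, false⟩ u, p.IsPath ∧ p.length = k} := by
      refine ⟨2 * N, ?_⟩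
      rintro x ⟨u, p, hp, rfl⟩
      have h1 : p.support.length ≤ 2 * N := by
        rw [hNdef, ← cardD G]
        exact List.Nodup.length_le_card hp.support_nodup
      rw [SimpleGraph.Walk.length_support] at h1
      omega
    apply _root_.le_antisymm
    · refine csSup_le ⟨0, ⟨⟨g0, false⟩, SimpleGraph.Walk.nil, ?_, rfl⟩⟩ ?_
      · exact SimpleGraph.Walk.IsPath.nil
      rintro x ⟨u, p, hp, rfl⟩
      have hsup := p.support_eq_cons
      have hch := p.isChain_adj_support
      rw [hsup] at hch
      have hnd := hp.support_nodup
      rw [hsup] at hnd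
      have hls : (((⟨g0, false⟩ : GenDihedral G)) :: p.support.tail).length
          = p.length + 1 := by
        rw [← hsup, SimpleGraph.Walk.length_support]
      by_cases hc : m < zc
      · -- trivial bound by the number of vertices
        have h1 : p.support.length ≤ 2 * N := by
          rw [hNdef, ← cardD G]
          exact List.Nodup.length_le_card hp.support_nodup
        rw [SimpleGraph.Walk.length_support] at h1
        have htt : t = m := by rw [ht]; exact min_eq_left (by omega)
        have h3 : t * zc = N := by rw [htt, ← hN]
        omega
      · have htt : t = zc - 1 := by rw [ht]; exact min_eq_right (by omega)
        have h3 : t * zc = zc * (zc - 1) := by rw [htt, hmulc]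
        rcases upper_count (⟨g0, false⟩ : GenDihedral G) rfl hvg' p.support.tail hch hnd
          with h | h
        · rw [hls, ← hzc, ← hNdef] at h
          omega
        · rw [hls, ← hzc] at h
          omega
    · obtain ⟨u, p, hp, hplen⟩ := lower_path g0 hvg'
      refine le_csSup hbdd ⟨u, p, hp, ?_⟩
      rw [← hm, ← hzc, ← hNdef, ← ht] at hplen
      omega
  rw [hdiv, key]
  split_ifs with hc
  · have htt : t = m := by rw [ht]; exact min_eq_left (by omega)
    have h3 : t * zc = N := by rw [htt, ← hN]
    omega
  · have htt : t = zc - 1 := by rw [ht]; exact min_eq_right (by omega)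
    have h3 : t * zc = zc * (zc - 1) := by rw [htt, hmulc]
    omega

open GenDihedral in
/-- Detour eccentricity of a central vertex `v ∈ Ω₁ = Z(D(G)) = {(g,1) : g² = e}` in the
commuting graph of a non-abelian `D(G)`: it equals `2n - 1` if `n/z < z`, and
`n + z(z-1) - 1` if `n/z ≥ z`, where `n = |G|` and `z = |{g : g² = e}|`. -/
theorem stmt10 {G : Type} [CommGroup G] [Fintype G] [DecidableEq G]
    (hna : ∃ g : G, g ^ 2 ≠ 1) (n z : ℕ) (hn : n = Fintype.card G)
    (hz : z = (Finset.univ.filter fun g : G => g ^ 2 = 1).card)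
    (v : GenDihedral G) (hv : v.b = false ∧ v.g ^ 2 = 1) :
    detourEcc (commGraph G) v =
      if n / z < z then 2 * n - 1 else n + z * (z - 1) - 1 := by
  exact stmt10' hna n z hn hz v hv
end

section
/- Let G be a finite abelian group of order n, D(G) its generalized dihedral group (assumed non-abelian), \Gamma the commuting graph of D(G), and z = |{g \in G : g^2 = e}|. For every vertex v \notin Z(D(G)) (i.e., v = (g,1) with g^2 \ne e, or v = (g,-1)), the detour eccentricity of v in \Gamma equals 2n - 1 if n/z \le z, and equals n + z^2 - 1 if n/z > z. -/
namespace GenDihedral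
variable {G : Type} [CommGroup G]


theorem key1 {a b : G} : a * b = b * a⁻¹ ↔ a * a = 1 := by
  constructor
  · intro h
    have h2 : b * (a * a) = b * 1 := by
      rw [mul_one, ← mul_assoc, mul_comm b a, h, mul_assoc, inv_mul_cancel, mul_one]
    exact mul_left_cancel h2
  · intro h
    have : a⁻¹ = a := inv_eq_of_mul_eq_one_right h
    rw [this, mul_comm]

theorem key2 {a b : G} : a * b⁻¹ = b * a⁻¹ ↔ a * a = b * b := by
  have e1 : a * b⁻¹ * (b * a) = a * a := by rw [mul_assoc, inv_mul_cancel_left]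
  have e2 : b * a⁻¹ * (b * a) = b * b := by
    rw [mul_assoc, mul_comm b a, inv_mul_cancel_left]
  constructor
  · intro h; rw [← e1, h, e2]
  · intro h; exact mul_right_cancel (b := b * a) (by rw [e1, e2, h])

theorem adj_rot_rot {a b : G} (h : a ≠ b) :
    (commGraph G).Adj ⟨a, false⟩ ⟨b, false⟩ := by
  refine ⟨by simp [GenDihedral.ext_iff, h], ?_⟩
  simp [mul_def, mul_comm]

theorem adj_rot_refl {a b : G} (h : a ^ 2 = 1) :
    (commGraph G).Adj ⟨a, false⟩ ⟨b, true⟩ := by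
  refine ⟨by simp [GenDihedral.ext_iff], ?_⟩
  simp only [mul_def, Bool.false_eq_true, if_false, if_true, GenDihedral.mk.injEq]
  exact ⟨key1.mpr (by rw [← pow_two]; exact h), rfl⟩

theorem adj_refl_refl {a b : G} (hne : a ≠ b) (h : a ^ 2 = b ^ 2) :
    (commGraph G).Adj ⟨a, true⟩ ⟨b, true⟩ := by
  refine ⟨by simp [GenDihedral.ext_iff, hne], ?_⟩
  simp only [mul_def, Bool.false_eq_true, if_false, if_true, GenDihedral.mk.injEq]
  exact ⟨key2.mpr (by rw [← pow_two, ← pow_two]; exact h), trivial⟩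

theorem sq_eq_of_adj_refl_refl {a b : G}
    (h : (commGraph G).Adj ⟨a, true⟩ ⟨b, true⟩) : a ^ 2 = b ^ 2 := by
  obtain ⟨-, h2⟩ := h
  simp only [mul_def, Bool.false_eq_true, if_false, if_true, GenDihedral.mk.injEq] at h2
  rw [pow_two, pow_two]
  exact key2.mp h2.1

theorem sq_one_of_adj_rot_refl {a b : G}
    (h : (commGraph G).Adj ⟨a, false⟩ ⟨b, true⟩) : a ^ 2 = 1 := by
  obtain ⟨-, h2⟩ := h
  simp only [mul_def, Bool.false_eq_true, if_false, if_true, GenDihedral.mk.injEq] at h2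
  rw [pow_two]
  exact key1.mp h2.1

theorem adj_central {c : G} (hc : c ^ 2 = 1) {x : GenDihedral G}
    (hne : x ≠ ⟨c, false⟩) : (commGraph G).Adj ⟨c, false⟩ x := by
  obtain ⟨a, b⟩ := x
  cases b with
  | false => exact adj_rot_rot (fun h => hne (by simp [GenDihedral.ext_iff, h.symm]))
  | true => exact adj_rot_refl hc

theorem adj_central' {c : G} (hc : c ^ 2 = 1) {x : GenDihedral G}
    (hne : x ≠ ⟨c, false⟩) : (commGraph G).Adj x ⟨c, false⟩ :=
  (adj_central hc hne).symm

theorem exists_walk_of_chain {W : Type} (Γ : SimpleGraph W) (v : W) (l : List W)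
    (h : List.Chain Γ.Adj v l) : ∃ u, ∃ p : Γ.Walk v u, p.support = v :: l := by
  induction l generalizing v with
  | nil => exact ⟨v, .nil, by simp⟩
  | cons w t ih =>
    obtain ⟨hadj, hch⟩ := List.chain_cons.mp h
    obtain ⟨u, p, hs⟩ := ih w hch
    exact ⟨u, .cons hadj p, by simp [hs]⟩

end GenDihedral

namespace GenDihedral
section
variable {G : Type} [CommGroup G] [Fintype G] [DecidableEq G]

def Zf (G : Type) [CommGroup G] [Fintype G] [DecidableEq G] : Finset G :=
  Finset.univ.filter fun g => g ^ 2 = 1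

def Qf (G : Type) [CommGroup G] [Fintype G] [DecidableEq G] : Finset G :=
  Finset.univ.image (· ^ 2)

def blockF (s : G) : Finset G := Finset.univ.filter fun h => h ^ 2 = s

theorem one_mem_Zf : (1 : G) ∈ Zf G := by simp [Zf]

theorem Zf_card_pos : 0 < (Zf G).card := Finset.card_pos.mpr ⟨1, one_mem_Zf⟩

theorem card_blockF (a : G) : (blockF (a ^ 2)).card = (Zf G).card := by
  apply Finset.card_bij' (fun h _ => h * a⁻¹) (fun g _ => g * a)
  · intro h hh
    simp only [blockF, Finset.mem_filter, Finset.mem_univ, true_and] at hh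
    simp only [Zf, Finset.mem_filter, Finset.mem_univ, true_and]
    rw [mul_pow, hh, inv_pow, mul_inv_cancel]
  · intro g hg
    simp only [Zf, Finset.mem_filter, Finset.mem_univ, true_and] at hg
    simp only [blockF, Finset.mem_filter, Finset.mem_univ, true_and]
    rw [mul_pow, hg, one_mul]
  · intro h _; simp
  · intro g _; simp

def sqSub (G : Type) [CommGroup G] : Subgroup G where
  carrier := {g | g ^ 2 = 1}
  one_mem' := one_pow 2
  mul_mem' := fun {a b} ha hb => by
    simp only [Set.mem_setOf_eq] at *
    rw [mul_pow, ha, hb, one_mul]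
  inv_mem' := fun {a} ha => by
    simp only [Set.mem_setOf_eq] at *
    rw [inv_pow, ha, inv_one]

theorem Zf_card_dvd : (Zf G).card ∣ Fintype.card G := by
  have h1 : Nat.card (sqSub G) = (Zf G).card := by
    have : Nat.card (sqSub G) = Nat.card {g : G // g ^ 2 = 1} := rfl
    rw [this, Nat.card_eq_fintype_card, Fintype.card_subtype]
    rfl
  have := Subgroup.card_subgroup_dvd_card (sqSub G)
  rwa [h1, Nat.card_eq_fintype_card] at this

theorem card_Qf_mul : (Qf G).card * (Zf G).card = Fintype.card G := by
  have h := Finset.card_eq_sum_card_image (fun g : G => g ^ 2) Finset.univ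
  rw [Finset.card_univ] at h
  have h2 : ∀ s ∈ Qf G,
      (Finset.univ.filter fun a => a ^ 2 = s).card = (Zf G).card := by
    intro s hs
    simp only [Qf, Finset.mem_image, Finset.mem_univ, true_and] at hs
    obtain ⟨a, rfl⟩ := hs
    exact card_blockF a
  rw [show Finset.image (fun g : G => g ^ 2) Finset.univ = Qf G from rfl,
    Finset.sum_congr rfl h2, Finset.sum_const, smul_eq_mul] at h
  exact h.symm

theorem Qf_card_eq : (Qf G).card = Fintype.card G / (Zf G).card := by
  rw [← card_Qf_mul, Nat.mul_div_cancel _ Zf_card_pos]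

theorem Nf_card : (Finset.univ.filter fun g : G => ¬ g ^ 2 = 1).card
    = Fintype.card G - (Zf G).card := by
  have := Finset.card_filter_add_card_filter_not (s := (Finset.univ : Finset G))
    (p := fun g => g ^ 2 = 1)
  rw [Finset.card_univ] at this
  have hz : (Zf G).card = (Finset.univ.filter fun g : G => g ^ 2 = 1).card := rfl
  omega

end
end GenDihedral


namespace GenDihedral
variable {G : Type} [CommGroup G] [Fintype G] [DecidableEq G]

theorem sq_eq_of_adj' {x y : GenDihedral G} (hx : x.b = true) (hy : y.b = true)
    (h : (commGraph G).Adj x y) : x.g ^ 2 = y.g ^ 2 := by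
  obtain ⟨a, ab⟩ := x; obtain ⟨c, cb⟩ := y
  simp only at hx hy; subst hx; subst hy
  exact sq_eq_of_adj_refl_refl h

theorem sq_one_of_adj' {x y : GenDihedral G} (hx : x.b = false) (hy : y.b = true)
    (h : (commGraph G).Adj x y) : x.g ^ 2 = 1 := by
  obtain ⟨a, ab⟩ := x; obtain ⟨c, cb⟩ := y
  simp only at hx hy; subst hx; subst hy
  exact sq_one_of_adj_rot_refl h

theorem sq_one_of_adj'' {x y : GenDihedral G} (hx : x.b = true) (hy : y.b = false)
    (h : (commGraph G).Adj x y) : y.g ^ 2 = 1 :=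
  sq_one_of_adj' hy hx h.symm

theorem upper_hard (hbig : 2 * (Zf G).card ≤ Fintype.card G)
    (l : List (GenDihedral G)) (hch : l.Chain' (commGraph G).Adj) (hnd : l.Nodup) :
    l.length ≤ Fintype.card G + (Zf G).card * (Zf G).card := by
  classical
  set n := Fintype.card G with hn
  set z := (Zf G).card with hzdef
  set A : ℕ → GenDihedral G := fun m => l.getD m 1 with hA
  have F1 : ∀ {m : ℕ}, m < l.length → A m ∈ l := by
    intro m hm
    show l.getD m 1 ∈ l
    rw [List.getD_eq_get l 1 ⟨m, hm⟩]
    exact l.get_mem _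
  have F2 : ∀ {m m' : ℕ}, m < l.length → m' < l.length → A m = A m' → m = m' := by
    intro m m' hm hm' he
    have h2 : l.get ⟨m, hm⟩ = l.get ⟨m', hm'⟩ := by
      rw [← List.getD_eq_get l 1 ⟨m, hm⟩, ← List.getD_eq_get l 1 ⟨m', hm'⟩]
      exact he
    have := hnd.get_inj_iff.mp h2
    exact Fin.mk.inj_iff.mp this
  have F3 : ∀ {m : ℕ}, m + 1 < l.length → (commGraph G).Adj (A m) (A (m + 1)) := by
    intro m hm
    show (commGraph G).Adj (l.getD m 1) (l.getD (m+1) 1)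
    rw [List.getD_eq_get l 1 ⟨m, by omega⟩, List.getD_eq_get l 1 ⟨m + 1, hm⟩]
    exact List.isChain_iff_getElem.mp hch m (by omega)
  set s : ℕ → ℕ := fun j => Nat.findGreatest (fun i => 0 < i ∧ (A (i-1)).b = false) j
    with hs
  have S1 : ∀ j, s j ≤ j := fun j => Nat.findGreatest_le j
  have S2 : ∀ {j m : ℕ}, (A j).b = true → s j ≤ m → m ≤ j → (A m).b = true := by
    intro j m hj hsm hmj
    by_contra hb
    have hb' : (A m).b = false := by
      cases h : (A m).b
      · rfl
      · exact absurd h hb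
    rcases Nat.lt_or_ge m j with hlt | hge
    · have : m + 1 ≤ s j := Nat.le_findGreatest (by omega)
        ⟨by omega, by simpa using hb'⟩
      omega
    · have hmeq : m = j := le_antisymm hmj hge
      rw [hmeq, hj] at hb'
      exact Bool.noConfusion hb'
  have S3 : ∀ {j : ℕ}, 0 < s j → (A (s j - 1)).b = false := by
    intro j hpos
    have hex : ∃ k, 0 < k ∧ k ≤ j ∧ (0 < k ∧ (A (k-1)).b = false) := by
      by_contra hc
      push_neg at hc
      have h0 : s j = 0 := Nat.findGreatest_eq_zero_iff.mpr
        (fun k hk1 hk2 hPk => (hc k hk1 hk2 hPk.1) hPk.2)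
      omega
    obtain ⟨k, hk1, hk2, hk3⟩ := hex
    exact (Nat.findGreatest_spec (P := fun i => 0 < i ∧ (A (i-1)).b = false)
      hk2 hk3).2
  have S4 : ∀ {j : ℕ}, j < l.length → (A j).b = true →
      ∀ m, s j ≤ m → m ≤ j → (A m).g ^ 2 = (A (s j)).g ^ 2 := by
    intro j hjlen hj m hsm hmj
    induction m, hsm using Nat.le_induction with
    | base => rfl
    | succ m hm ih =>
      have hmj' : m ≤ j := by omega
      have h1 : (A m).b = true := S2 hj hm hmj'
      have h2 : (A (m+1)).b = true := S2 hj (by omega) hmj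
      have hadj := F3 (show m + 1 < l.length by omega)
      exact (sq_eq_of_adj' h1 h2 hadj).symm.trans (ih hmj')
  set RF : Finset ℕ := (Finset.range l.length).filter (fun m => (A m).b = true) with hRF
  set RotF : Finset ℕ := (Finset.range l.length).filter (fun m => ¬ (A m).b = true)
    with hRotF
  have hRFmem : ∀ {m : ℕ}, m ∈ RF ↔ m < l.length ∧ (A m).b = true := by
    intro m; rw [hRF]; simp [Finset.mem_filter]
  have hRotmem : ∀ {m : ℕ}, m ∈ RotF ↔ m < l.length ∧ (A m).b = false := by
    intro m; rw [hRotF]; simp [Finset.mem_filter]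
  have hsplit : RF.card + RotF.card = l.length := by
    rw [hRF, hRotF, Finset.card_filter_add_card_filter_not, Finset.card_range]
  have hRot_le : RotF.card ≤ n := by
    rw [hn, ← Finset.card_univ]
    apply Finset.card_le_card_of_injOn (fun m => (A m).g)
    · intro a _; exact Finset.mem_univ _
    · intro m hm m' hm' he
      rw [Finset.mem_coe] at hm hm'
      rw [hRotmem] at hm hm'
      refine F2 hm.1 hm'.1 (GenDihedral.ext he ?_)
      rw [hm.2, hm'.2]
  set SS : Finset ℕ := RF.image s with hSS
  have hSSfact : ∀ i ∈ SS, i < l.length ∧ (A i).b = true := by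
    intro i hi
    rw [hSS] at hi
    obtain ⟨j, hj, rfl⟩ := Finset.mem_image.mp hi
    rw [hRFmem] at hj
    exact ⟨lt_of_le_of_lt (S1 j) hj.1, S2 hj.2 le_rfl (S1 j)⟩
  have hRF_le : RF.card ≤ z * SS.card := by
    have h := Finset.card_eq_sum_card_image s RF
    rw [← hSS] at h
    rw [h, mul_comm]
    have hb : ∀ i ∈ SS, (RF.filter fun m => s m = i).card ≤ z := by
      intro i hi
      have hiref := hSSfact i hi
      have hblock : (blockF ((A i).g ^ 2)).card = z := by
        rw [hzdef]; exact card_blockF _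
      rw [← hblock]
      apply Finset.card_le_card_of_injOn (fun m => (A m).g)
      · intro m hm
        rw [Finset.mem_coe, Finset.mem_filter, hRFmem] at hm
        obtain ⟨⟨hmlen, hmb⟩, hsm⟩ := hm
        have := S4 hmlen hmb m (S1 m) le_rfl
        rw [hsm] at this
        simp only [Finset.mem_coe, blockF, Finset.mem_filter, Finset.mem_univ, true_and]
        exact this
      · intro m hm m' hm' he
        rw [Finset.mem_coe, Finset.mem_filter, hRFmem] at hm hm'
        refine F2 hm.1.1 hm'.1.1 (GenDihedral.ext he ?_)
        rw [hm.1.2, hm'.1.2]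
    calc ∑ i ∈ SS, (RF.filter fun m => s m = i).card ≤ ∑ _i ∈ SS, z :=
          Finset.sum_le_sum hb
    _ = SS.card * z := by rw [Finset.sum_const, smul_eq_mul]
  have hS0 : (SS.erase 0).card ≤ z := by
    rw [hzdef]
    apply Finset.card_le_card_of_injOn (fun i => (A (i-1)).g)
    · intro i hi
      have hine := Finset.ne_of_mem_erase hi
      have hi0 := Finset.mem_of_mem_erase hi
      have hfact := hSSfact i hi0
      rw [hSS] at hi0
      obtain ⟨j, hj, rfl⟩ := Finset.mem_image.mp hi0
      have hpos : 0 < s j := Nat.pos_of_ne_zero hine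
      have hb := S3 hpos
      have hadj := F3 (show (s j - 1) + 1 < l.length by omega)
      rw [(by omega : s j - 1 + 1 = s j)] at hadj
      have hone := sq_one_of_adj' hb hfact.2 hadj
      simp only [Finset.mem_coe, Zf, Finset.mem_filter, Finset.mem_univ, true_and]
      exact hone
    · intro i hi i' hi' he
      rw [Finset.mem_coe] at hi hi'
      have hine := Finset.ne_of_mem_erase hi
      have hine' := Finset.ne_of_mem_erase hi'
      have hf := hSSfact i (Finset.mem_of_mem_erase hi)
      have hf' := hSSfact i' (Finset.mem_of_mem_erase hi')
      have hb : (A (i-1)).b = false := by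
        rw [hSS] at hi
        obtain ⟨j, hj, hji⟩ := Finset.mem_image.mp (Finset.mem_of_mem_erase hi)
        rw [← hji]; exact S3 (by omega)
      have hb' : (A (i'-1)).b = false := by
        rw [hSS] at hi'
        obtain ⟨j, hj, hji⟩ := Finset.mem_image.mp (Finset.mem_of_mem_erase hi')
        rw [← hji]; exact S3 (by omega)
      have : i - 1 = i' - 1 :=
        F2 (by omega) (by omega) (GenDihedral.ext he (by rw [hb, hb']))
      omega
  have hfinal : l.length ≤ n + z * z := by
    by_cases h0 : (0 : ℕ) ∈ SS
    · by_cases hfull : (SS.erase 0).card = z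
      · -- tight case
        have hA0 : (A 0).b = true := (hSSfact 0 h0).2
        have hsurj := Finset.surj_on_of_inj_on_of_card_le
          (s := SS.erase 0) (t := Zf G) (fun i _ => (A (i-1)).g)
          (fun i hi => by
            have hine := Finset.ne_of_mem_erase hi
            have hi0 := Finset.mem_of_mem_erase hi
            have hfact := hSSfact i hi0
            rw [hSS] at hi0
            obtain ⟨j, hj, hji⟩ := Finset.mem_image.mp hi0
            have hb : (A (i-1)).b = false := by rw [← hji]; exact S3 (by omega)
            have hadj := F3 (show (i - 1) + 1 < l.length by omega)
            rw [(by omega : i - 1 + 1 = i)] at hadj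
            have hone := sq_one_of_adj' hb hfact.2 hadj
            simp only [Zf, Finset.mem_filter, Finset.mem_univ, true_and]
            exact hone)
          (fun i i' hi hi' he => by
            have hf := hSSfact i (Finset.mem_of_mem_erase hi)
            have hf' := hSSfact i' (Finset.mem_of_mem_erase hi')
            have hine := Finset.ne_of_mem_erase hi
            have hine' := Finset.ne_of_mem_erase hi'
            have hb : (A (i-1)).b = false := by
              rw [hSS] at hi
              obtain ⟨j, hj, hji⟩ := Finset.mem_image.mp (Finset.mem_of_mem_erase hi)
              rw [← hji]; exact S3 (by omega)
            have hb' : (A (i'-1)).b = false := by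
              rw [hSS] at hi'
              obtain ⟨j, hj, hji⟩ := Finset.mem_image.mp (Finset.mem_of_mem_erase hi')
              rw [← hji]; exact S3 (by omega)
            have : i - 1 = i' - 1 :=
              F2 (by omega) (by omega) (GenDihedral.ext he (by rw [hb, hb']))
            omega)
          (by rw [hfull, hzdef])
        have star : ∀ g : G, g ^ 2 = 1 →
            ∃ m, m + 1 < l.length ∧ A m = ⟨g, false⟩ ∧ (A (m+1)).b = true := by
          intro g hg
          obtain ⟨i, hi, hgi⟩ := hsurj g
            (by simp only [Zf, Finset.mem_filter, Finset.mem_univ, true_and]; exact hg)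
          have hine := Finset.ne_of_mem_erase hi
          have hfact := hSSfact i (Finset.mem_of_mem_erase hi)
          have hb : (A (i-1)).b = false := by
            have hi0 := Finset.mem_of_mem_erase hi
            rw [hSS] at hi0
            obtain ⟨j, hj, hji⟩ := Finset.mem_image.mp hi0
            rw [← hji]; exact S3 (by omega)
          refine ⟨i - 1, by omega, GenDihedral.ext hgi.symm hb, ?_⟩
          rw [(by omega : i - 1 + 1 = i)]
          exact hfact.2
        have claim : ∀ m, m < l.length → (A m).b = false → (A m).g ^ 2 = 1 := by
          intro m
          induction m using Nat.strong_induction_on with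
          | _ m ih =>
            intro hmlen hmb
            cases m with
            | zero => rw [hA0] at hmb; exact Bool.noConfusion hmb
            | succ m' =>
              by_contra hnc
              have hadj := F3 (show m' + 1 < l.length from hmlen)
              have hb' : (A m').b = false := by
                cases hb : (A m').b
                · rfl
                · exact absurd (sq_one_of_adj'' hb hmb hadj) hnc
              have hsq : (A m').g ^ 2 = 1 := ih m' (by omega) (by omega) hb'
              obtain ⟨m0, hm0len, hm0eq, hm0b⟩ := star (A m').g hsq
              have hAm' : A m' = ⟨(A m').g, false⟩ := by rw [← hb']
              have hm0 : m0 = m' := F2 (by omega) (by omega) (hm0eq.trans hAm'.symm)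
              rw [hm0] at hm0b
              rw [hmb] at hm0b
              exact Bool.noConfusion hm0b
        have hRotz : RotF.card ≤ z := by
          rw [hzdef]
          apply Finset.card_le_card_of_injOn (fun m => (A m).g)
          · intro m hm
            rw [Finset.mem_coe, hRotmem] at hm
            simp only [Finset.mem_coe, Zf, Finset.mem_filter, Finset.mem_univ, true_and]
            exact claim m hm.1 hm.2
          · intro m hm m' hm' he
            rw [Finset.mem_coe, hRotmem] at hm hm'
            exact F2 hm.1 hm'.1 (GenDihedral.ext he (by rw [hm.2, hm'.2]))
        have hSScard : SS.card ≤ z + 1 := by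
          have := Finset.card_erase_add_one h0
          omega
        have h1 : RF.card ≤ z * (z + 1) :=
          le_trans hRF_le (Nat.mul_le_mul_left z hSScard)
        have h2 : z * (z + 1) = z * z + z := by ring
        omega
      · have hSScard : SS.card ≤ z := by
          have := Finset.card_erase_add_one h0
          omega
        have h1 : RF.card ≤ z * z :=
          le_trans hRF_le (Nat.mul_le_mul_left z hSScard)
        omega
    · have hSS_eq : SS.erase 0 = SS := Finset.erase_eq_of_notMem h0
      have hSScard : SS.card ≤ z := by rw [← hSS_eq]; exact hS0
      have h1 : RF.card ≤ z * z :=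
        le_trans hRF_le (Nat.mul_le_mul_left z hSScard)
      omega
  exact hfinal

end GenDihedral


namespace GenDihedral
variable {G : Type} [CommGroup G] [Fintype G] [DecidableEq G]

def rotL (gs : List G) : List (GenDihedral G) := gs.map (fun g => ⟨g, false⟩)
def reflL (gs : List G) : List (GenDihedral G) := gs.map (fun g => ⟨g, true⟩)
noncomputable def blockL (s : G) : List (GenDihedral G) := reflL (blockF s).toList
noncomputable def altL (ps : List (G × G)) : List (GenDihedral G) :=
  ps.flatMap (fun p => (⟨p.1, false⟩ : GenDihedral G) :: blockL p.2)

theorem rotL_nodup {gs : List G} (h : gs.Nodup) : (rotL gs).Nodup :=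
  h.map (fun _ _ h => congrArg GenDihedral.g h)

theorem reflL_nodup {gs : List G} (h : gs.Nodup) : (reflL gs).Nodup :=
  h.map (fun _ _ h => congrArg GenDihedral.g h)

theorem mem_rotL {gs : List G} {x : GenDihedral G} :
    x ∈ rotL gs ↔ x.b = false ∧ x.g ∈ gs := by
  constructor
  · rintro hm
    obtain ⟨g, hg, rfl⟩ := List.mem_map.mp hm
    exact ⟨rfl, hg⟩
  · rintro ⟨hb, hg⟩
    refine List.mem_map.mpr ⟨x.g, hg, ?_⟩
    rw [← hb]

theorem mem_reflL {gs : List G} {x : GenDihedral G} :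
    x ∈ reflL gs ↔ x.b = true ∧ x.g ∈ gs := by
  constructor
  · rintro hm
    obtain ⟨g, hg, rfl⟩ := List.mem_map.mp hm
    exact ⟨rfl, hg⟩
  · rintro ⟨hb, hg⟩
    refine List.mem_map.mpr ⟨x.g, hg, ?_⟩
    rw [← hb]

theorem mem_blockF {h s : G} : h ∈ blockF s ↔ h ^ 2 = s := by
  simp [blockF]

theorem mem_blockL {x : GenDihedral G} {s : G} :
    x ∈ blockL s ↔ x.b = true ∧ x.g ^ 2 = s := by
  rw [blockL, mem_reflL, Finset.mem_toList, mem_blockF]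

theorem blockL_length {s : G} (hs : s ∈ Qf G) :
    (blockL s).length = (Zf G).card := by
  obtain ⟨a, -, rfl⟩ := Finset.mem_image.mp hs
  rw [blockL, reflL, List.length_map, Finset.length_toList, card_blockF]

theorem blockL_ne_nil {s : G} (hs : s ∈ Qf G) : blockL s ≠ [] := by
  intro h
  have h1 := blockL_length hs
  rw [h] at h1
  have := Zf_card_pos (G := G)
  simp at h1
  omega

theorem chain'_rotL {gs : List G} (h : gs.Nodup) :
    List.Chain' (commGraph G).Adj (rotL gs) := by
  apply List.Pairwise.isChain
  rw [rotL, List.pairwise_map]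
  exact h.imp (fun hne => adj_rot_rot hne)

theorem chain'_reflL {gs : List G} {s : G} (h : gs.Nodup) (hsq : ∀ g ∈ gs, g ^ 2 = s) :
    List.Chain' (commGraph G).Adj (reflL gs) := by
  apply List.Pairwise.isChain
  rw [reflL, List.pairwise_map]
  refine h.imp_of_mem (fun {a b} ha hb hne => adj_refl_refl hne ?_)
  rw [hsq a ha, hsq b hb]

theorem chain'_blockL {s : G} : List.Chain' (commGraph G).Adj (blockL s) :=
  chain'_reflL (Finset.nodup_toList _) (fun g hg => mem_blockF.mp (Finset.mem_toList.mp hg))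

theorem altL_length {ps : List (G × G)} (hq : ∀ p ∈ ps, p.2 ∈ Qf G) :
    (altL ps).length = ps.length * (1 + (Zf G).card) := by
  induction ps with
  | nil => simp [altL]
  | cons p ps ih =>
    rw [altL, List.flatMap_cons, List.length_append, List.length_cons,
      blockL_length (hq p (List.mem_cons_self)), ← altL,
      ih (fun q hq' => hq q (List.mem_cons_of_mem p hq'))]
    rw [List.length_cons]
    ring

theorem mem_altL {x : GenDihedral G} {ps : List (G × G)} (hx : x ∈ altL ps) :
    (x.b = false ∧ x.g ∈ ps.map Prod.fst) ∨
      (x.b = true ∧ x.g ^ 2 ∈ ps.map Prod.snd) := by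
  induction ps with
  | nil => simp [altL] at hx
  | cons p ps ih =>
    rw [altL, List.flatMap_cons, ← altL] at hx
    rcases List.mem_append.mp hx with h1 | h2
    · rcases List.mem_cons.mp h1 with h3 | h4
      · left; rw [h3]; exact ⟨rfl, by simp⟩
      · right
        obtain ⟨hb, hs⟩ := mem_blockL.mp h4
        exact ⟨hb, by simp [hs]⟩
    · rcases ih h2 with ⟨hb, hm⟩ | ⟨hb, hm⟩
      · left; exact ⟨hb, by simp [List.mem_cons_of_mem]; right; simpa using hm⟩
      · right; exact ⟨hb, by simp; right; simpa using hm⟩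

theorem altL_nodup {ps : List (G × G)} (hf : (ps.map Prod.fst).Nodup)
    (hs : (ps.map Prod.snd).Nodup) : (altL ps).Nodup := by
  induction ps with
  | nil => simp [altL]
  | cons p ps ih =>
    rw [altL, List.flatMap_cons, ← altL, List.nodup_append']
    rw [List.map_cons, List.nodup_cons] at hf hs
    refine ⟨?_, ih hf.2 hs.2, ?_⟩
    · rw [List.nodup_cons]
      refine ⟨fun hmem => ?_, reflL_nodup (Finset.nodup_toList _)⟩
      have := (mem_blockL.mp hmem).1
      simp at this
    · intro x hx1 hx2
      rcases List.mem_cons.mp hx1 with h3 | h4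
      · rcases mem_altL hx2 with ⟨hb, hm⟩ | ⟨hb, hm⟩
        · rw [h3] at hm; exact hf.1 hm
        · rw [h3] at hb; simp at hb
      · obtain ⟨hb, hsq⟩ := mem_blockL.mp h4
        rcases mem_altL hx2 with ⟨hb', hm⟩ | ⟨hb', hm⟩
        · rw [hb] at hb'; simp at hb'
        · rw [hsq] at hm; exact hs.1 hm

theorem head_altL {ps : List (G × G)} {y : GenDihedral G} (hy : y ∈ (altL ps).head?) :
    ∃ c ∈ ps.map Prod.fst, y = (⟨c, false⟩ : GenDihedral G) := by
  cases ps with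
  | nil => simp [altL] at hy
  | cons p ps =>
    rw [altL, List.flatMap_cons] at hy
    simp only [List.cons_append, List.head?_cons, Option.mem_def, Option.some.injEq] at hy
    exact ⟨p.1, by simp, hy.symm⟩

theorem chain'_altL {ps : List (G × G)} (hc1 : ∀ p ∈ ps, p.1 ^ 2 = 1)
    (hq : ∀ p ∈ ps, p.2 ∈ Qf G) (hf : (ps.map Prod.fst).Nodup) :
    List.Chain' (commGraph G).Adj (altL ps) := by
  induction ps with
  | nil => simp [altL, List.Chain']
  | cons p ps ih =>
    rw [altL, List.flatMap_cons, ← altL]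
    have hp1 : p.1 ^ 2 = 1 := hc1 p (List.mem_cons_self)
    refine List.IsChain.append ?_ ?_ ?_
    · rw [List.isChain_cons]
      refine ⟨fun y hy => ?_, chain'_blockL⟩
      have hym := List.mem_of_mem_head? hy
      obtain ⟨hb, -⟩ := mem_blockL.mp hym
      exact adj_central hp1 (fun he => by rw [he] at hb; simp at hb)
    · exact ih (fun q hq' => hc1 q (List.mem_cons_of_mem p hq'))
        (fun q hq' => hq q (List.mem_cons_of_mem p hq'))
        (by rw [List.map_cons, List.nodup_cons] at hf; exact hf.2)
    · intro x hx y hy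
      obtain ⟨c, hcm, rfl⟩ := head_altL hy
      have hc2 : c ^ 2 = 1 := by
        obtain ⟨q, hq', hq2⟩ := List.mem_map.mp hcm
        rw [← hq2]; exact hc1 q (List.mem_cons_of_mem p hq')
      have hxm : x ∈ (⟨p.1, false⟩ : GenDihedral G) :: blockL p.2 :=
        List.mem_of_mem_getLast? hx
      refine adj_central' hc2 ?_
      rcases List.mem_cons.mp hxm with h3 | h4
      · -- x is the central p.1; but the block is nonempty so this is impossible
        have hbne := blockL_ne_nil (hq p (List.mem_cons_self))
        rw [show (⟨p.1, false⟩ : GenDihedral G) :: blockL p.2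
            = [⟨p.1, false⟩] ++ blockL p.2 from rfl, List.getLast?_append] at hx
        cases hbl : (blockL p.2).getLast? with
        | none => exact absurd (List.getLast?_eq_none_iff.mp hbl) hbne
        | some w =>
          rw [hbl] at hx
          simp only [Option.some_or, Option.mem_def, Option.some.injEq] at hx
          subst hx
          obtain ⟨hb, -⟩ := mem_blockL.mp (List.mem_of_mem_getLast? (by rw [hbl]; rfl))
          intro he; rw [he] at hb; simp at hb
      · obtain ⟨hb, -⟩ := mem_blockL.mp h4
        intro he; rw [he] at hb; simp at hb

end GenDihedral


namespace GenDihedral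
variable {G : Type} [CommGroup G] [Fintype G] [DecidableEq G]

theorem Nf_toList_mem {g : G} :
    g ∈ (Finset.univ.filter fun g : G => ¬ g ^ 2 = 1).toList ↔ ¬ g ^ 2 = 1 := by
  simp [Finset.mem_toList]

theorem Zf_toList_mem {g : G} : g ∈ (Zf G).toList ↔ g ^ 2 = 1 := by
  simp [Finset.mem_toList, Zf]

theorem exists_list_rot (v : GenDihedral G) (hvb : v.b = false) (hvg : ¬ v.g ^ 2 = 1)
    (K : ℕ) (hK1 : K ≤ (Zf G).card) (hK2 : K ≤ (Qf G).card) :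
    ∃ t, List.Chain (commGraph G).Adj v t ∧ (v :: t).Nodup ∧
      (v :: t).length = Fintype.card G + K * (Zf G).card := by
  classical
  obtain ⟨vg, vb⟩ := v
  dsimp only at hvb hvg
  subst hvb
  set z := (Zf G).card with hz
  set n := Fintype.card G with hn
  set cs : List G := (Zf G).toList with hcs
  set Nl : List G := (Finset.univ.filter fun g : G => ¬ g ^ 2 = 1).toList with hNl
  set qs : List G := (Qf G).toList.take K with hqs
  set ps : List (G × G) := (cs.take K).zip qs with hps
  set gs : List G := cs.drop K ++ Nl.erase vg with hgs
  have hcs_len : cs.length = z := Finset.length_toList _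
  have hcs_nodup : cs.Nodup := Finset.nodup_toList _
  have hcs_sq : ∀ c ∈ cs, c ^ 2 = 1 := fun c hc => Zf_toList_mem.mp hc
  have hNl_nodup : Nl.Nodup := Finset.nodup_toList _
  have hNl_len : Nl.length = n - z := by
    rw [hNl, Finset.length_toList, Nf_card]
  have hvNl : vg ∈ Nl := Nf_toList_mem.mpr hvg
  have hqs_len : qs.length = K := by
    rw [hqs, List.length_take, Finset.length_toList]
    omega
  have htake_len : (cs.take K).length = K := by
    rw [List.length_take]; omega
  have hpsf : ps.map Prod.fst = cs.take K :=
    List.map_fst_zip (le_of_eq (by rw [htake_len, hqs_len]))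
  have hpss : ps.map Prod.snd = qs :=
    List.map_snd_zip (le_of_eq (by rw [htake_len, hqs_len]))
  have hps_len : ps.length = K := by
    rw [hps, List.length_zip, htake_len, hqs_len, min_self]
  have hqs_mem : ∀ q ∈ qs, q ∈ Qf G := fun q hq =>
    Finset.mem_toList.mp (List.mem_of_mem_take hq)
  have hps1 : ∀ p ∈ ps, p.1 ^ 2 = 1 := by
    intro p hp
    have : p.1 ∈ ps.map Prod.fst := List.mem_map_of_mem (f := Prod.fst) hp
    rw [hpsf] at this
    exact hcs_sq _ (List.mem_of_mem_take this)
  have hps2 : ∀ p ∈ ps, p.2 ∈ Qf G := by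
    intro p hp
    have : p.2 ∈ ps.map Prod.snd := List.mem_map_of_mem (f := Prod.snd) hp
    rw [hpss] at this
    exact hqs_mem _ this
  have hpsf_nodup : (ps.map Prod.fst).Nodup := by rw [hpsf]; exact hcs_nodup.take
  have hpss_nodup : (ps.map Prod.snd).Nodup := by
    rw [hpss]; exact (Finset.nodup_toList _).take
  -- the rotations list
  have hvgs_nodup : (vg :: gs).Nodup := by
    rw [List.nodup_cons, hgs, List.nodup_append']
    refine ⟨?_, hcs_nodup.drop, hNl_nodup.erase _, ?_⟩
    · intro hmem
      rcases List.mem_append.mp hmem with h1 | h2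
      · exact hvg (hcs_sq _ (List.mem_of_mem_drop h1))
      · exact ((List.Nodup.mem_erase_iff hNl_nodup).mp h2).1 rfl
    · intro a ha1 ha2
      have h1 := hcs_sq _ (List.mem_of_mem_drop ha1)
      have h2 := Nf_toList_mem.mp ((List.Nodup.mem_erase_iff hNl_nodup).mp ha2).2
      exact h2 h1
  have hnotake : ∀ a, a ∈ vg :: gs → a ∈ cs.take K → False := by
    intro a ha hatake
    have hsq1 := hcs_sq _ (List.mem_of_mem_take hatake)
    rcases List.mem_cons.mp ha with h1 | h2
    · rw [← h1] at hvg; exact hvg hsq1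
    · rcases List.mem_append.mp h2 with h3 | h4
      · exact (List.disjoint_take_drop hcs_nodup le_rfl) hatake h3
      · exact (Nf_toList_mem.mp ((List.Nodup.mem_erase_iff hNl_nodup).mp h4).2) hsq1
  refine ⟨rotL gs ++ altL ps, ?_, ?_, ?_⟩
  · -- chain
    show List.Chain' (commGraph G).Adj (⟨vg, false⟩ :: (rotL gs ++ altL ps))
    have hform : (⟨vg, false⟩ : GenDihedral G) :: (rotL gs ++ altL ps)
        = rotL (vg :: gs) ++ altL ps := rfl
    rw [hform]
    refine List.IsChain.append (chain'_rotL hvgs_nodup)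
      (chain'_altL hps1 hps2 hpsf_nodup) ?_
    intro x hx y hy
    obtain ⟨c, hcm, rfl⟩ := head_altL hy
    rw [hpsf] at hcm
    have hc2 : c ^ 2 = 1 := hcs_sq _ (List.mem_of_mem_take hcm)
    refine adj_central' hc2 ?_
    intro he
    have hxm : x ∈ rotL (vg :: gs) := List.mem_of_mem_getLast? hx
    obtain ⟨hb, hg⟩ := mem_rotL.mp hxm
    rw [he] at hg
    exact hnotake c hg hcm
  · -- nodup
    show ((⟨vg, false⟩ : GenDihedral G) :: (rotL gs ++ altL ps)).Nodup
    have hform : (⟨vg, false⟩ : GenDihedral G) :: (rotL gs ++ altL ps)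
        = rotL (vg :: gs) ++ altL ps := rfl
    rw [hform, List.nodup_append']
    refine ⟨rotL_nodup hvgs_nodup, altL_nodup hpsf_nodup hpss_nodup, ?_⟩
    intro x hx1 hx2
    obtain ⟨hb, hg⟩ := mem_rotL.mp hx1
    rcases mem_altL hx2 with ⟨hb', hm⟩ | ⟨hb', hm⟩
    · rw [hpsf] at hm
      exact hnotake _ hg hm
    · rw [hb] at hb'; simp at hb'
  · -- length
    show ((⟨vg, false⟩ : GenDihedral G) :: (rotL gs ++ altL ps)).length = n + K * z
    rw [List.length_cons, List.length_append, rotL, List.length_map,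
      altL_length hps2, hps_len, hgs, List.length_append, List.length_drop,
      List.length_erase_of_mem hvNl, hcs_len, hNl_len]
    have h1 : K * (1 + z) = K + K * z := by ring
    have h2 : z ≤ n := by
      rw [hz, hn]; exact le_trans (Finset.card_filter_le _ _) (le_of_eq (Finset.card_univ))
    have h3 : 1 ≤ n - z := by
      have : Nl ≠ [] := List.ne_nil_of_mem hvNl
      have := List.length_pos_iff.mpr this
      omega
    rw [← hz]
    omega


theorem exists_list_refl (v : GenDihedral G) (hvb : v.b = true)
    (K : ℕ) (hK0 : 1 ≤ K) (hK1 : K ≤ (Zf G).card) (hK2 : K ≤ (Qf G).card) :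
    ∃ t, List.Chain (commGraph G).Adj v t ∧ (v :: t).Nodup ∧
      (v :: t).length = Fintype.card G + K * (Zf G).card := by
  classical
  obtain ⟨vg, vb⟩ := v
  dsimp only at hvb
  subst hvb
  set z := (Zf G).card with hz
  set n := Fintype.card G with hn
  set cs : List G := (Zf G).toList with hcs
  set Nl : List G := (Finset.univ.filter fun g : G => ¬ g ^ 2 = 1).toList with hNl
  have hsq0Q : vg ^ 2 ∈ Qf G := Finset.mem_image.mpr ⟨vg, Finset.mem_univ _, rfl⟩
  set bl : List G := (blockF (vg ^ 2)).toList.erase vg with hbl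
  set qs : List G := ((Qf G).erase (vg ^ 2)).toList.take (K-1) with hqs
  set ps : List (G × G) := (cs.take (K-1)).zip qs with hps
  set gs : List G := cs.drop (K-1) ++ Nl with hgs
  have hzpos : 0 < z := Zf_card_pos
  have hcs_len : cs.length = z := Finset.length_toList _
  have hcs_nodup : cs.Nodup := Finset.nodup_toList _
  have hcs_sq : ∀ c ∈ cs, c ^ 2 = 1 := fun c hc => Zf_toList_mem.mp hc
  have hNl_nodup : Nl.Nodup := Finset.nodup_toList _
  have hNl_len : Nl.length = n - z := by
    rw [hNl, Finset.length_toList, Nf_card]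
  have hNl_sq : ∀ g ∈ Nl, ¬ g ^ 2 = 1 := fun g hg => Nf_toList_mem.mp hg
  have hvbl : vg ∈ (blockF (vg ^ 2)).toList := Finset.mem_toList.mpr (mem_blockF.mpr rfl)
  have hbl_sq : ∀ g ∈ bl, g ^ 2 = vg ^ 2 := fun g hg =>
    mem_blockF.mp (Finset.mem_toList.mp (List.mem_of_mem_erase hg))
  have hbl_len : bl.length = z - 1 := by
    rw [hbl, List.length_erase_of_mem hvbl, Finset.length_toList, card_blockF]
  have hvgbl_nodup : (vg :: bl).Nodup := by
    rw [List.nodup_cons]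
    exact ⟨fun hm => ((Finset.nodup_toList _).mem_erase_iff.mp hm).1 rfl,
      (Finset.nodup_toList _).erase _⟩
  have hQe_len : ((Qf G).erase (vg ^ 2)).toList.length = (Qf G).card - 1 := by
    rw [Finset.length_toList, Finset.card_erase_of_mem hsq0Q]
  have hqs_len : qs.length = K - 1 := by
    rw [hqs, List.length_take, hQe_len]
    omega
  have htake_len : (cs.take (K-1)).length = K - 1 := by
    rw [List.length_take]; omega
  have hpsf : ps.map Prod.fst = cs.take (K-1) :=
    List.map_fst_zip (le_of_eq (by rw [htake_len, hqs_len]))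
  have hpss : ps.map Prod.snd = qs :=
    List.map_snd_zip (le_of_eq (by rw [htake_len, hqs_len]))
  have hps_len : ps.length = K - 1 := by
    rw [hps, List.length_zip, htake_len, hqs_len, min_self]
  have hqs_mem : ∀ q ∈ qs, q ∈ Qf G ∧ q ≠ vg ^ 2 := by
    intro q hq
    have := Finset.mem_toList.mp (List.mem_of_mem_take hq)
    exact ⟨Finset.mem_of_mem_erase this, Finset.ne_of_mem_erase this⟩
  have hps1 : ∀ p ∈ ps, p.1 ^ 2 = 1 := by
    intro p hp
    have : p.1 ∈ ps.map Prod.fst := List.mem_map_of_mem (f := Prod.fst) hp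
    rw [hpsf] at this
    exact hcs_sq _ (List.mem_of_mem_take this)
  have hps2 : ∀ p ∈ ps, p.2 ∈ Qf G := by
    intro p hp
    have : p.2 ∈ ps.map Prod.snd := List.mem_map_of_mem (f := Prod.snd) hp
    rw [hpss] at this
    exact (hqs_mem _ this).1
  have hpsf_nodup : (ps.map Prod.fst).Nodup := by rw [hpsf]; exact hcs_nodup.take
  have hpss_nodup : (ps.map Prod.snd).Nodup := by
    rw [hpss]; exact (Finset.nodup_toList _).take
  have hgs_nodup : gs.Nodup := by
    rw [hgs, List.nodup_append']
    refine ⟨hcs_nodup.drop, hNl_nodup, ?_⟩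
    intro a ha1 ha2
    exact hNl_sq a ha2 (hcs_sq _ (List.mem_of_mem_drop ha1))
  obtain ⟨c0, rest, hc0⟩ : ∃ c0 rest, cs.drop (K-1) = c0 :: rest := by
    cases h : cs.drop (K-1) with
    | nil =>
      have := congrArg List.length h
      rw [List.length_drop, hcs_len] at this
      simp at this
      omega
    | cons c0 rest => exact ⟨c0, rest, rfl⟩
  have hc0cs : c0 ∈ cs := List.mem_of_mem_drop (by rw [hc0]; exact List.mem_cons_self)
  have hc0sq : c0 ^ 2 = 1 := hcs_sq _ hc0cs
  have hgs_form : gs = c0 :: (rest ++ Nl) := by rw [hgs, hc0]; rfl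
  have hrot_head : (rotL gs).head? = some ⟨c0, false⟩ := by
    rw [hgs_form, rotL, List.map_cons, List.head?_cons]
  -- helper for adjacency from a reflection or earlier central to a central
  have hnotake : ∀ x : GenDihedral G, x ∈ altL ps → x ≠ (⟨c0, false⟩ : GenDihedral G) := by
    intro x hx he
    rcases mem_altL hx with ⟨hb, hm⟩ | ⟨hb, hm⟩
    · rw [hpsf] at hm
      rw [he] at hm
      dsimp only at hm
      exact (List.disjoint_take_drop hcs_nodup le_rfl) hm (by rw [hc0]; exact List.mem_cons_self)
    · rw [he] at hb; simp at hb
  refine ⟨reflL bl ++ (altL ps ++ rotL gs), ?_, ?_, ?_⟩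
  · show List.Chain' (commGraph G).Adj
      ((⟨vg, true⟩ : GenDihedral G) :: (reflL bl ++ (altL ps ++ rotL gs)))
    have hform : (⟨vg, true⟩ : GenDihedral G) :: (reflL bl ++ (altL ps ++ rotL gs))
        = reflL (vg :: bl) ++ (altL ps ++ rotL gs) := rfl
    rw [hform]
    refine List.IsChain.append
      (chain'_reflL hvgbl_nodup (by
        intro g hg
        rcases List.mem_cons.mp hg with h1 | h2
        · rw [h1]
        · exact hbl_sq g h2))
      (List.IsChain.append (chain'_altL hps1 hps2 hpsf_nodup) (chain'_rotL hgs_nodup) ?_) ?_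
    · -- altL → rotL
      intro x hx y hy
      rw [hrot_head] at hy
      simp only [Option.mem_def, Option.some.injEq] at hy
      subst hy
      exact adj_central' hc0sq (hnotake x (List.mem_of_mem_getLast? hx))
    · -- reflL → (altL ++ rotL)
      intro x hx y hy
      have hxm := List.mem_of_mem_getLast? hx
      obtain ⟨hxb, -⟩ := mem_reflL.mp hxm
      rw [List.head?_append] at hy
      have hy' : ∃ c, c ^ 2 = 1 ∧ y = (⟨c, false⟩ : GenDihedral G) := by
        cases halt : (altL ps).head? with
        | none =>
          rw [halt, Option.none_or, hrot_head] at hy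
          simp only [Option.mem_def, Option.some.injEq] at hy
          exact ⟨c0, hc0sq, hy.symm⟩
        | some y' =>
          rw [halt] at hy
          simp only [Option.some_or, Option.mem_def, Option.some.injEq] at hy
          obtain ⟨c, hcm, hcy⟩ := head_altL (by rw [halt]; rfl)
          rw [hpsf] at hcm
          exact ⟨c, hcs_sq _ (List.mem_of_mem_take hcm), by rw [← hy, hcy]⟩
      obtain ⟨c, hc2, rfl⟩ := hy'
      refine adj_central' hc2 ?_
      intro he
      rw [he] at hxb
      simp at hxb
  · show ((⟨vg, true⟩ : GenDihedral G) :: (reflL bl ++ (altL ps ++ rotL gs))).Nodup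
    have hform : (⟨vg, true⟩ : GenDihedral G) :: (reflL bl ++ (altL ps ++ rotL gs))
        = reflL (vg :: bl) ++ (altL ps ++ rotL gs) := rfl
    rw [hform, List.nodup_append']
    refine ⟨reflL_nodup hvgbl_nodup, ?_, ?_⟩
    · rw [List.nodup_append']
      refine ⟨altL_nodup hpsf_nodup hpss_nodup, rotL_nodup hgs_nodup, ?_⟩
      intro x hx1 hx2
      obtain ⟨hb, hg⟩ := mem_rotL.mp hx2
      rcases mem_altL hx1 with ⟨hb', hm⟩ | ⟨hb', hm⟩
      · rw [hpsf] at hm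
        rcases List.mem_append.mp hg with h3 | h4
        · exact (List.disjoint_take_drop hcs_nodup le_rfl) hm h3
        · exact hNl_sq _ h4 (hcs_sq _ (List.mem_of_mem_take hm))
      · rw [hb] at hb'; simp at hb'
    · intro x hx1 hx2
      obtain ⟨hxb, hxg⟩ := mem_reflL.mp hx1
      have hxsq : x.g ^ 2 = vg ^ 2 := by
        rcases List.mem_cons.mp hxg with h1 | h2
        · rw [h1]
        · exact hbl_sq _ h2
      rcases List.mem_append.mp hx2 with h3 | h4
      · rcases mem_altL h3 with ⟨hb', hm⟩ | ⟨hb', hm⟩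
        · rw [hxb] at hb'; simp at hb'
        · rw [hpss] at hm
          rw [hxsq] at hm
          exact (hqs_mem _ hm).2 rfl
      · obtain ⟨hb', -⟩ := mem_rotL.mp h4
        rw [hxb] at hb'; simp at hb'
  · show ((⟨vg, true⟩ : GenDihedral G) :: (reflL bl ++ (altL ps ++ rotL gs))).length
      = n + K * z
    rw [List.length_cons, List.length_append, List.length_append, reflL,
      List.length_map, rotL, List.length_map, altL_length hps2, hps_len,
      hgs, List.length_append, List.length_drop, hbl_len, hcs_len, hNl_len]
    rw [← hz]
    have h2 : z ≤ n := by
      rw [hz, hn, Zf]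
      exact le_trans (Finset.card_filter_le _ _) (le_of_eq (Finset.card_univ))
    have e1 : (K-1) * (1+z) = (K-1) + (K-1)*z := by ring
    have e2 : (K-1)*z + z = K*z := by
      have h : K - 1 + 1 = K := by omega
      calc (K-1)*z + z = ((K-1)+1)*z := by ring
      _ = K*z := by rw [h]
    omega

end GenDihedral


namespace GenDihedral
variable {G : Type} [CommGroup G] [Fintype G] [DecidableEq G]

theorem card_GD : Fintype.card (GenDihedral G) = 2 * Fintype.card G := by
  rw [Fintype.card_congr
    (⟨fun x => (x.g, x.b), fun p => ⟨p.1, p.2⟩, fun _ => rfl, fun _ => rfl⟩ :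
      GenDihedral G ≃ G × Bool),
    Fintype.card_prod, Fintype.card_bool]
  ring

end GenDihedral


open GenDihedral in
/-- Detour eccentricity of a non-central vertex `v ∉ Z(D(G))` (i.e. `v = (g,1)` with
`g² ≠ e`, or `v = (g,-1)`) in the commuting graph of a non-abelian `D(G)`: it equals
`2n - 1` if `n/z ≤ z`, and `n + z² - 1` if `n/z > z`, where `n = |G|` and
`z = |{g : g² = e}|`. -/
theorem stmt11 {G : Type} [CommGroup G] [Fintype G] [DecidableEq G]
    (hna : ∃ g : G, g ^ 2 ≠ 1) (n z : ℕ) (hn : n = Fintype.card G)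
    (hz : z = (Finset.univ.filter fun g : G => g ^ 2 = 1).card)
    (v : GenDihedral G) (hv : ¬(v.b = false ∧ v.g ^ 2 = 1)) :
    detourEcc (commGraph G) v =
      if n / z ≤ z then 2 * n - 1 else n + z ^ 2 - 1 := by
  classical
  subst hn
  have hz' : z = (Zf G).card := by rw [hz]; rfl
  have hdvd : (Zf G).card ∣ Fintype.card G := Zf_card_dvd
  have hzpos : 0 < (Zf G).card := Zf_card_pos
  have hQcard : (Qf G).card = Fintype.card G / (Zf G).card := Qf_card_eq
  have hzlen : (Zf G).card ≤ Fintype.card G := by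
    rw [Zf]
    exact le_trans (Finset.card_filter_le _ _) (le_of_eq (Finset.card_univ))
  set K := min (Fintype.card G / (Zf G).card) (Zf G).card with hK
  have hK1 : K ≤ (Zf G).card := min_le_right _ _
  have hK2 : K ≤ (Qf G).card := by rw [hQcard]; exact min_le_left _ _
  have hK0 : 1 ≤ K := le_min ((Nat.one_le_div_iff hzpos).mpr hzlen) hzpos
  obtain ⟨t, hch, hnd, hlen⟩ : ∃ t, List.Chain (commGraph G).Adj v t ∧
      (v :: t).Nodup ∧ (v :: t).length = Fintype.card G + K * (Zf G).card := by
    cases hb : v.b with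
    | true => exact exists_list_refl v hb K hK0 hK1 hK2
    | false =>
      have hvg : ¬ v.g ^ 2 = 1 := fun h => hv ⟨hb, h⟩
      exact exists_list_rot v hb hvg K hK1 hK2
  obtain ⟨u, p, hsup⟩ := exists_walk_of_chain (commGraph G) v t hch
  have hpath : p.IsPath := by rw [SimpleGraph.Walk.isPath_def, hsup]; exact hnd
  have hsuplen : p.length + 1 = Fintype.card G + K * (Zf G).card := by
    rw [← SimpleGraph.Walk.length_support, hsup]; exact hlen
  have hcard_pos : 1 ≤ Fintype.card G := Fintype.card_pos
  set T := Fintype.card G + K * (Zf G).card - 1 with hT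
  have hplen : p.length = T := by omega
  have hmem : T ∈ {m : ℕ | ∃ u : GenDihedral G, ∃ p : (commGraph G).Walk v u,
      p.IsPath ∧ p.length = m} := ⟨u, p, hpath, hplen⟩
  have hub : ∀ m ∈ {m : ℕ | ∃ u : GenDihedral G, ∃ p : (commGraph G).Walk v u,
      p.IsPath ∧ p.length = m}, m ≤ T := by
    rintro m ⟨u', p', hp', rfl⟩
    have hnd' : p'.support.Nodup := (SimpleGraph.Walk.isPath_def _).mp hp'
    have hch' := p'.isChain_adj_support
    have hs : p'.support.length = p'.length + 1 := p'.length_support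
    by_cases hcase : Fintype.card G / (Zf G).card ≤ (Zf G).card
    · have h2n : p'.support.length ≤ 2 * Fintype.card G := by
        have := hnd'.length_le_card
        rwa [card_GD] at this
      have hKz : K * (Zf G).card = Fintype.card G := by
        rw [hK, min_eq_left hcase]; exact Nat.div_mul_cancel hdvd
      omega
    · have hKz : K = (Zf G).card := by rw [hK, min_eq_right (le_of_not_ge hcase)]
      have hbig : 2 * (Zf G).card ≤ Fintype.card G := by
        have h1 : (Zf G).card + 1 ≤ Fintype.card G / (Zf G).card := by omega
        have h3 := Nat.div_mul_cancel hdvd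
        have h4 := Nat.mul_le_mul_right (Zf G).card h1
        rw [h3] at h4
        nlinarith [hzpos]
      have h5 := upper_hard hbig p'.support hch' hnd'
      rw [hT, hKz]
      omega
  have hSup : detourEcc (commGraph G) v = T :=
    le_antisymm (csSup_le ⟨T, hmem⟩ hub) (le_csSup ⟨T, hub⟩ hmem)
  rw [hSup, hz']
  by_cases hcase : Fintype.card G / (Zf G).card ≤ (Zf G).card
  · rw [if_pos hcase]
    have hKz : K * (Zf G).card = Fintype.card G := by
      rw [hK, min_eq_left hcase]; exact Nat.div_mul_cancel hdvd
    omega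
  · rw [if_neg hcase]
    have hKz : K = (Zf G).card := by rw [hK, min_eq_right (le_of_not_ge hcase)]
    have hpow : (Zf G).card ^ 2 = (Zf G).card * (Zf G).card := by ring
    rw [hT, hKz, hpow]
end

section
/- Let G be a finite abelian group of odd order n \ge 3 (so z = |{g : g^2 = e}| = 1 and D(G) is non-abelian), and let \Gamma be the commuting graph of D(G). Let s_i denote the number of resolving sets of \Gamma of cardinality i. Then s_{2n-3} = n(n-1), s_{2n-2} = n^2 + n - 1, s_{2n-1} = 2n, and s_{2n} = 1; equivalently, the resolving polynomial of \Gamma is \beta(\Gamma, x) = x^{2n-3}(x^3 + 2n x^2 + (n^2 + n - 1)x + n(n-1)). -/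
/-- `W` is a resolving set of `Γ` if every pair of distinct vertices is distinguished
by its vector of graph distances to the vertices of `W`. -/
def IsResolvingSet {V : Type} (Γ : SimpleGraph V) (W : Set V) : Prop :=
  ∀ u v : V, u ≠ v → ∃ w ∈ W, Γ.dist u w ≠ Γ.dist v w

/-- The metric dimension of `Γ`: the minimum cardinality of a resolving set. -/
noncomputable def metricDim {V : Type} (Γ : SimpleGraph V) : ℕ :=
  sInf {k : ℕ | ∃ W : Finset V, IsResolvingSet Γ ↑W ∧ W.card = k}

/-- The number `sᵢ` of resolving sets of `Γ` of cardinality `i` (the coefficient of `xⁱ`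
in the resolving polynomial `β(Γ, x) = Σᵢ sᵢ xⁱ`). -/
noncomputable def numResolvingSets {V : Type} (Γ : SimpleGraph V) (i : ℕ) : ℕ :=
  Set.ncard {W : Finset V | IsResolvingSet Γ ↑W ∧ W.card = i}

namespace StmtAux
set_option linter.unusedSectionVars false
open GenDihedral Finset

variable {G : Type} [CommGroup G] [Fintype G] [DecidableEq G]

lemma sq_one (hodd : Odd (Fintype.card G)) {g : G} (h : g * g = 1) : g = 1 := by
  have h1 : orderOf g ∣ 2 := orderOf_dvd_of_pow_eq_one (by rwa [pow_two])
  have h2 : orderOf g ∣ Fintype.card G := orderOf_dvd_card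
  have hc : Nat.Coprime 2 (Fintype.card G) := Nat.coprime_two_left.mpr hodd
  have : orderOf g ∣ 1 := hc ▸ Nat.dvd_gcd h1 h2
  exact orderOf_eq_one_iff.mp (Nat.dvd_one.mp this)

lemma comm_iff (hodd : Odd (Fintype.card G)) (u v : GenDihedral G) :
    u * v = v * u ↔
      (u.b = false ∧ v.b = false) ∨ (u.b = false ∧ u.g = 1) ∨ (v.b = false ∧ v.g = 1) ∨ u = v := by
  obtain ⟨x, bu⟩ := u; obtain ⟨y, bv⟩ := v
  cases bu <;> cases bv <;>
    simp only [GenDihedral.mul_def, GenDihedral.ext_iff, Bool.xor_false, Bool.xor_true,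
      Bool.false_xor, Bool.true_xor, if_true, if_false, Bool.not_true, Bool.not_false] <;> simp
  · exact mul_comm x y
  · constructor
    · intro h
      have h2 : x * y * x = y := by rw [h, inv_mul_cancel_right]
      have : x * x * y = y := by rw [mul_right_comm, h2]
      exact sq_one hodd (mul_eq_right.mp this)
    · rintro rfl; simp
  · constructor
    · intro h
      have h2 : y⁻¹ * x = y * x := by rw [mul_comm, h]
      have h3 : y⁻¹ = y := mul_right_cancel h2
      exact sq_one hodd (by nth_rewrite 1 [← h3]; exact inv_mul_cancel y)
    · rintro rfl; simp
  · constructor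
    · intro h
      have key : x * y⁻¹ * (y * x⁻¹) = 1 := by
        rw [mul_assoc, inv_mul_cancel_left, mul_inv_cancel]
      have h2 : x * y⁻¹ * (x * y⁻¹) = 1 := by nth_rewrite 2 [h]; exact key
      exact mul_inv_eq_one.mp (sq_one hodd h2)
    · rintro rfl; rfl
end StmtAux

namespace StmtAux
set_option linter.unusedSectionVars false
open GenDihedral Finset
variable {G : Type} [CommGroup G] [Fintype G] [DecidableEq G]

lemma adj_iff (u v : GenDihedral G) : (commGraph G).Adj u v ↔ u ≠ v ∧ u * v = v * u := Iff.rfl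

lemma adj_one {v : GenDihedral G} (hv : v ≠ 1) : (commGraph G).Adj 1 v :=
  ⟨fun h => hv h.symm, by rw [one_mul, mul_one]⟩

/-- explicit distance function -/
def dfun (u v : GenDihedral G) : ℕ :=
  if u = v then 0 else if u * v = v * u then 1 else 2

lemma dist_eq_dfun (u v : GenDihedral G) : (commGraph G).dist u v = dfun u v := by
  unfold dfun
  split_ifs with h1 h2
  · subst h1; exact SimpleGraph.dist_self
  · exact SimpleGraph.dist_eq_one_iff_adj.mpr ⟨h1, h2⟩
  · have hu : u ≠ 1 := by
      rintro rfl
      exact h2 (adj_one (Ne.symm h1)).2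
    have hv : v ≠ 1 := by
      rintro rfl
      exact h2 ((adj_one h1).symm).2
    let w : (commGraph G).Walk u v :=
      ((adj_one hu).symm.toWalk).append ((adj_one hv).toWalk)
    have hle : (commGraph G).dist u v ≤ 2 := by
      have := SimpleGraph.dist_le w
      simpa [w, SimpleGraph.Walk.length_append] using this
    have hpos : 0 < (commGraph G).dist u v :=
      SimpleGraph.Reachable.pos_dist_of_ne ⟨w⟩ h1
    have hne1 : (commGraph G).dist u v ≠ 1 := fun h =>
      h2 (SimpleGraph.dist_eq_one_iff_adj.mp h).2
    omega

end StmtAux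

namespace StmtAux
set_option linter.unusedSectionVars false
open GenDihedral Finset
variable {G : Type} [CommGroup G] [Fintype G] [DecidableEq G]

lemma eq_one_iff (w : GenDihedral G) : w = 1 ↔ w.g = 1 ∧ w.b = false := by
  rw [GenDihedral.one_def, GenDihedral.ext_iff]

/-- non-identity rotations -/
def Rot (G : Type) [CommGroup G] [Fintype G] [DecidableEq G] : Finset (GenDihedral G) :=
  univ.filter (fun x => x.b = false ∧ x.g ≠ 1)

/-- reflections -/
def Ref (G : Type) [CommGroup G] [Fintype G] [DecidableEq G] : Finset (GenDihedral G) :=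
  univ.filter (fun x => x.b = true)

lemma mem_Rot {x : GenDihedral G} : x ∈ Rot G ↔ x.b = false ∧ x.g ≠ 1 := by
  simp [Rot]

lemma mem_Ref {x : GenDihedral G} : x ∈ Ref G ↔ x.b = true := by
  simp [Ref]

lemma card_Ref : (Ref G).card = Fintype.card G := by
  rw [← Finset.card_univ (α := G)]
  apply Finset.card_bij (fun x _ => x.g)
  · intro a _; exact mem_univ _
  · intro a ha b hb hab
    ext
    · exact hab
    · rw [mem_Ref.mp ha, mem_Ref.mp hb]
  · intro g _
    exact ⟨⟨g, true⟩, mem_Ref.mpr rfl, rfl⟩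

lemma card_Rot : (Rot G).card = Fintype.card G - 1 := by
  have h1 : (1 : GenDihedral G) ∉ Rot G := by simp [mem_Rot, GenDihedral.one_def]
  have h2 : (insert 1 (Rot G)).card = Fintype.card G := by
    rw [← Finset.card_univ (α := G)]
    apply Finset.card_bij (fun x _ => x.g)
    · intro a _; exact mem_univ _
    · intro a ha b hb hab
      simp only [mem_insert, mem_Rot, eq_one_iff] at ha hb
      ext
      · exact hab
      · rcases ha with ha | ha <;> rcases hb with hb | hb <;>
          simp [ha.1, ha.2, hb.1, hb.2] at hab ⊢
    · intro g _
      by_cases hg : g = 1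
      · exact ⟨1, mem_insert_self _ _, by simp [GenDihedral.one_def, hg]⟩
      · exact ⟨⟨g, false⟩, mem_insert_of_mem (mem_Rot.mpr ⟨rfl, hg⟩), rfl⟩
  have := Finset.card_insert_of_notMem h1
  omega

lemma card_V : Fintype.card (GenDihedral G) = 2 * Fintype.card G := by
  have e : GenDihedral G ≃ G × Bool :=
    ⟨fun x => (x.g, x.b), fun p => ⟨p.1, p.2⟩, fun _ => rfl, fun _ => rfl⟩
  rw [Fintype.card_congr e, Fintype.card_prod, Fintype.card_bool]
  ring

lemma trichotomy (x : GenDihedral G) : x = 1 ∨ x ∈ Rot G ∨ x ∈ Ref G := by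
  rcases Bool.eq_false_or_eq_true x.b with h | h
  · exact Or.inr (Or.inr (mem_Ref.mpr h))
  · by_cases hg : x.g = 1
    · exact Or.inl (eq_one_iff x |>.mpr ⟨hg, h⟩)
    · exact Or.inr (Or.inl (mem_Rot.mpr ⟨h, hg⟩))

section Dist
variable (hodd : Odd (Fintype.card G))
include hodd

lemma dist_one (w : GenDihedral G) (hw : (1 : GenDihedral G) ≠ w) :
    (commGraph G).dist 1 w = 1 := by
  rw [dist_eq_dfun, dfun, if_neg hw, if_pos (by rw [one_mul, mul_one])]

lemma dist_rot {z : GenDihedral G} (hz : z ∈ Rot G) (w : GenDihedral G) (hzw : z ≠ w) :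
    (commGraph G).dist z w = if w.b = false then 1 else 2 := by
  obtain ⟨hzb, hzg⟩ := mem_Rot.mp hz
  rw [dist_eq_dfun, dfun, if_neg hzw]
  simp only [comm_iff hodd]
  rcases Bool.eq_false_or_eq_true w.b with hw | hw <;> simp [hw, hzb, hzg, hzw]

lemma dist_ref {z : GenDihedral G} (hz : z ∈ Ref G) (w : GenDihedral G) (hzw : z ≠ w) :
    (commGraph G).dist z w = if w = 1 then 1 else 2 := by
  have hzb := mem_Ref.mp hz
  rw [dist_eq_dfun, dfun, if_neg hzw]
  simp only [comm_iff hodd]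
  by_cases hw : w = 1
  · simp [hw, hzb, eq_one_iff, GenDihedral.one_def]
  · have hnc : ¬ ((z.b = false ∧ w.b = false) ∨ (z.b = false ∧ z.g = 1) ∨
        (w.b = false ∧ w.g = 1) ∨ z = w) := by
      rintro (⟨h, _⟩ | ⟨h, _⟩ | ⟨h1, h2⟩ | h)
      · rw [hzb] at h; exact Bool.true_eq_false.mp h
      · rw [hzb] at h; exact Bool.true_eq_false.mp h
      · exact hw ((eq_one_iff w).mpr ⟨h2, h1⟩)
      · exact hzw h
    rw [if_neg hnc, if_neg hw]

end Dist

lemma resolving_iff (hodd : Odd (Fintype.card G)) (h3 : 3 ≤ Fintype.card G)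
    (W : Finset (GenDihedral G)) :
    IsResolvingSet (commGraph G) ↑W ↔ ((Rot G \ W).card ≤ 1 ∧ (Ref G \ W).card ≤ 1) := by
  constructor
  · intro hres
    constructor
    · by_contra h
      obtain ⟨u, hu, v, hv, huv⟩ := (Finset.one_lt_card (s := Rot G \ W)).mp (by omega)
      obtain ⟨w, hwW, hd⟩ := hres u v huv
      apply hd
      rw [dist_rot hodd (mem_sdiff.mp hu).1 w (fun h => (mem_sdiff.mp hu).2 (h ▸ hwW)),
        dist_rot hodd (mem_sdiff.mp hv).1 w (fun h => (mem_sdiff.mp hv).2 (h ▸ hwW))]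
    · by_contra h
      obtain ⟨u, hu, v, hv, huv⟩ := (Finset.one_lt_card (s := Ref G \ W)).mp (by omega)
      obtain ⟨w, hwW, hd⟩ := hres u v huv
      apply hd
      rw [dist_ref hodd (mem_sdiff.mp hu).1 w (fun h => (mem_sdiff.mp hu).2 (h ▸ hwW)),
        dist_ref hodd (mem_sdiff.mp hv).1 w (fun h => (mem_sdiff.mp hv).2 (h ▸ hwW))]
  · rintro ⟨hA, hB⟩
    have hrot : (Rot G ∩ W).Nonempty := by
      rw [← Finset.card_pos]
      have := Finset.card_sdiff_add_card_inter (Rot G) W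
      rw [card_Rot] at this
      omega
    have href : (Ref G ∩ W).Nonempty := by
      rw [← Finset.card_pos]
      have := Finset.card_sdiff_add_card_inter (Ref G) W
      rw [card_Ref] at this
      omega
    obtain ⟨r, hr⟩ := hrot
    obtain ⟨f, hf⟩ := href
    have hrR := (mem_inter.mp hr).1
    have hrW := (mem_inter.mp hr).2
    have hfF := (mem_inter.mp hf).1
    have hfW := (mem_inter.mp hf).2
    have hr1 : r ≠ 1 := fun h => (mem_Rot.mp hrR).2 (by rw [h]; rfl)
    have hf1 : f ≠ 1 := fun h => by
      have := mem_Ref.mp hfF; rw [h] at this; exact Bool.false_ne_true this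
    have hrf : r ≠ f := fun h => by
      have h1 := (mem_Rot.mp hrR).1; have h2 := mem_Ref.mp hfF
      rw [h, h2] at h1; exact Bool.true_eq_false.mp h1
    -- helper: distinguishing chosen pairs
    have main : ∀ u v : GenDihedral G, u ≠ v →
        (u = 1 ∨ ((u ∈ Rot G ∧ v ∈ Rot G) ∨ (u ∈ Rot G ∧ v ∈ Ref G) ∨ (u ∈ Ref G ∧ v ∈ Ref G))) →
        ∃ w ∈ W, (commGraph G).dist u w ≠ (commGraph G).dist v w := by
      rintro u v huv (rfl | ⟨hu, hv⟩ | ⟨hu, hv⟩ | ⟨hu, hv⟩)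
      · -- u = 1
        rcases trichotomy v with h1 | hv | hv
        · exact absurd h1.symm huv
        · refine ⟨f, hfW, ?_⟩
          have hvf : v ≠ f := fun h => by
            have h1 := (mem_Rot.mp hv).1; have h2 := mem_Ref.mp hfF
            rw [h, h2] at h1; exact Bool.true_eq_false.mp h1
          rw [dist_one hodd f (Ne.symm hf1), dist_rot hodd hv f hvf, mem_Ref.mp hfF]
          simp
        · refine ⟨r, hrW, ?_⟩
          have hvr : v ≠ r := fun h => by
            have h1 := (mem_Rot.mp hrR).1; have h2 := mem_Ref.mp hv
            rw [← h, h2] at h1; exact Bool.true_eq_false.mp h1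
          rw [dist_one hodd r (Ne.symm hr1), dist_ref hodd hv r hvr, if_neg hr1]
          omega
      · -- both rotations
        have hone : u ∈ W ∨ v ∈ W := by
          by_contra hc
          push_neg at hc
          have : 1 < (Rot G \ W).card :=
            Finset.one_lt_card.mpr ⟨u, mem_sdiff.mpr ⟨hu, hc.1⟩, v, mem_sdiff.mpr ⟨hv, hc.2⟩, huv⟩
          omega
        rcases hone with hw | hw
        · refine ⟨u, hw, ?_⟩
          rw [SimpleGraph.dist_self, dist_rot hodd hv u (Ne.symm huv)]
          split_ifs <;> omega
        · refine ⟨v, hw, ?_⟩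
          rw [SimpleGraph.dist_self, dist_rot hodd hu v huv]
          split_ifs <;> omega
      · -- u rotation, v reflection
        refine ⟨r, hrW, ?_⟩
        have hvr : v ≠ r := fun h => by
          have h1 := (mem_Rot.mp hrR).1; have h2 := mem_Ref.mp hv
          rw [← h, h2] at h1; exact Bool.true_eq_false.mp h1
        rw [dist_ref hodd hv r hvr, if_neg hr1]
        by_cases hur : u = r
        · rw [hur, SimpleGraph.dist_self]; omega
        · rw [dist_rot hodd hu r hur, (mem_Rot.mp hrR).1]
          simp
      · -- both reflections
        have hone : u ∈ W ∨ v ∈ W := by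
          by_contra hc
          push_neg at hc
          have : 1 < (Ref G \ W).card :=
            Finset.one_lt_card.mpr ⟨u, mem_sdiff.mpr ⟨hu, hc.1⟩, v, mem_sdiff.mpr ⟨hv, hc.2⟩, huv⟩
          omega
        rcases hone with hw | hw
        · refine ⟨u, hw, ?_⟩
          rw [SimpleGraph.dist_self, dist_ref hodd hv u (Ne.symm huv)]
          split_ifs <;> omega
        · refine ⟨v, hw, ?_⟩
          rw [SimpleGraph.dist_self, dist_ref hodd hu v huv]
          split_ifs <;> omega
    intro u v huv
    rcases trichotomy u with h1u | hu | hu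
    · exact main u v huv (Or.inl h1u)
    · rcases trichotomy v with h1v | hv | hv
      · obtain ⟨w, hw1, hw2⟩ := main v u (Ne.symm huv) (Or.inl h1v)
        exact ⟨w, hw1, Ne.symm hw2⟩
      · exact main u v huv (Or.inr (Or.inl ⟨hu, hv⟩))
      · exact main u v huv (Or.inr (Or.inr (Or.inl ⟨hu, hv⟩)))
    · rcases trichotomy v with h1v | hv | hv
      · obtain ⟨w, hw1, hw2⟩ := main v u (Ne.symm huv) (Or.inl h1v)
        exact ⟨w, hw1, Ne.symm hw2⟩
      · obtain ⟨w, hw1, hw2⟩ := main v u (Ne.symm huv) (Or.inr (Or.inr (Or.inl ⟨hv, hu⟩)))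
        exact ⟨w, hw1, Ne.symm hw2⟩
      · exact main u v huv (Or.inr (Or.inr (Or.inr ⟨hu, hv⟩)))

end StmtAux

namespace StmtAux
set_option linter.unusedSectionVars false
open GenDihedral Finset
variable {G : Type} [CommGroup G] [Fintype G] [DecidableEq G]

lemma one_not_Rot : (1 : GenDihedral G) ∉ Rot G := by
  simp [mem_Rot, GenDihedral.one_def]

lemma one_not_Ref : (1 : GenDihedral G) ∉ Ref G := by
  simp [mem_Ref, GenDihedral.one_def]

lemma rot_ne_ref {r f : GenDihedral G} (hr : r ∈ Rot G) (hf : f ∈ Ref G) : r ≠ f := by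
  intro h
  have h1 := (mem_Rot.mp hr).1
  rw [h, mem_Ref.mp hf] at h1
  exact Bool.true_eq_false.mp h1

lemma num_eq (hodd : Odd (Fintype.card G)) (h3 : 3 ≤ Fintype.card G) (i : ℕ) :
    numResolvingSets (commGraph G) i =
      (univ.filter (fun W : Finset (GenDihedral G) =>
        ((Rot G \ W).card ≤ 1 ∧ (Ref G \ W).card ≤ 1) ∧ W.card = i)).card := by
  rw [numResolvingSets, ← Set.ncard_coe_finset]
  congr 1
  ext W
  simp [resolving_iff hodd h3]

lemma count_compl (j : ℕ) (hj : j ≤ 2 * Fintype.card G) :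
    (univ.filter (fun W : Finset (GenDihedral G) =>
      ((Rot G \ W).card ≤ 1 ∧ (Ref G \ W).card ≤ 1) ∧ W.card = 2 * Fintype.card G - j)).card =
    (univ.filter (fun S : Finset (GenDihedral G) =>
      ((Rot G ∩ S).card ≤ 1 ∧ (Ref G ∩ S).card ≤ 1) ∧ S.card = j)).card := by
  refine Finset.card_bij' (fun W _ => Wᶜ) (fun S _ => Sᶜ) ?_ ?_ ?_ ?_
  · intro W hW
    simp only [mem_filter, mem_univ, true_and] at hW ⊢
    obtain ⟨⟨h1, h2⟩, hc⟩ := hW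
    rw [sdiff_eq] at h1 h2
    refine ⟨⟨h1, h2⟩, ?_⟩
    rw [Finset.card_compl, card_V, hc]
    omega
  · intro S hS
    simp only [mem_filter, mem_univ, true_and] at hS ⊢
    obtain ⟨⟨h1, h2⟩, hc⟩ := hS
    have e1 : Rot G \ Sᶜ = Rot G ∩ S := by rw [sdiff_compl]; rfl
    have e2 : Ref G \ Sᶜ = Ref G ∩ S := by rw [sdiff_compl]; rfl
    rw [e1, e2, Finset.card_compl, card_V, hc]
    refine ⟨⟨h1, h2⟩, by omega⟩
  · intro W _; exact compl_compl W
  · intro S _; exact compl_compl S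

lemma count0 :
    (univ.filter (fun S : Finset (GenDihedral G) =>
      ((Rot G ∩ S).card ≤ 1 ∧ (Ref G ∩ S).card ≤ 1) ∧ S.card = 0)).card = 1 := by
  have he : (univ.filter (fun S : Finset (GenDihedral G) =>
      ((Rot G ∩ S).card ≤ 1 ∧ (Ref G ∩ S).card ≤ 1) ∧ S.card = 0)) = {∅} := by
    ext S
    simp only [mem_filter, mem_univ, true_and, mem_singleton, Finset.card_eq_zero]
    constructor
    · rintro ⟨_, h⟩; exact h
    · rintro rfl; simp
  rw [he, card_singleton]

lemma count1 :
    (univ.filter (fun S : Finset (GenDihedral G) =>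
      ((Rot G ∩ S).card ≤ 1 ∧ (Ref G ∩ S).card ≤ 1) ∧ S.card = 1)).card
      = 2 * Fintype.card G := by
  have he : (univ.filter (fun S : Finset (GenDihedral G) =>
      ((Rot G ∩ S).card ≤ 1 ∧ (Ref G ∩ S).card ≤ 1) ∧ S.card = 1))
      = univ.image (fun x : GenDihedral G => ({x} : Finset (GenDihedral G))) := by
    ext S
    simp only [mem_filter, mem_univ, true_and, Finset.mem_image]
    constructor
    · rintro ⟨_, h⟩
      obtain ⟨a, rfl⟩ := Finset.card_eq_one.mp h
      exact ⟨a, rfl⟩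
    · rintro ⟨a, rfl⟩
      refine ⟨⟨?_, ?_⟩, card_singleton a⟩
      · exact le_trans (Finset.card_le_card (inter_subset_right)) (le_of_eq (card_singleton a))
      · exact le_trans (Finset.card_le_card (inter_subset_right)) (le_of_eq (card_singleton a))
  rw [he, Finset.card_image_of_injective _ (fun a b h => Finset.singleton_injective h),
    card_univ, card_V]

end StmtAux

namespace StmtAux
set_option linter.unusedSectionVars false
open GenDihedral Finset
variable {G : Type} [CommGroup G] [Fintype G] [DecidableEq G]

lemma both_mem_contra {T : Finset (GenDihedral G)} {a b : GenDihedral G}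
    (ha : a ∈ T) (hb : b ∈ T) (hab : a ≠ b) (h : (T ∩ {a, b}).card ≤ 1) : False := by
  have hsub : ({a, b} : Finset (GenDihedral G)) ⊆ T ∩ {a, b} := by
    intro x hx
    rcases Finset.mem_insert.mp hx with rfl | hx'
    · exact mem_inter.mpr ⟨ha, hx⟩
    · have hxb := Finset.mem_singleton.mp hx'
      subst hxb
      exact mem_inter.mpr ⟨hb, hx⟩
  have := Finset.card_le_card hsub
  rw [Finset.card_pair hab] at this
  omega

lemma inter_pair_le {T : Finset (GenDihedral G)} {b : GenDihedral G} (a : GenDihedral G)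
    (ha : a ∉ T) : (T ∩ {a, b}).card ≤ 1 := by
  have hsub : T ∩ {a, b} ⊆ {b} := by
    intro y hy
    obtain ⟨hyT, hy2⟩ := mem_inter.mp hy
    rcases Finset.mem_insert.mp hy2 with rfl | hy3
    · exact absurd hyT ha
    · exact hy3
  exact le_trans (card_le_card hsub) (le_of_eq (card_singleton b))

lemma count2 (h3 : 3 ≤ Fintype.card G) :
    (univ.filter (fun S : Finset (GenDihedral G) =>
      ((Rot G ∩ S).card ≤ 1 ∧ (Ref G ∩ S).card ≤ 1) ∧ S.card = 2)).card
      = Fintype.card G ^ 2 + Fintype.card G - 1 := by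
  have he : (univ.filter (fun S : Finset (GenDihedral G) =>
      ((Rot G ∩ S).card ≤ 1 ∧ (Ref G ∩ S).card ≤ 1) ∧ S.card = 2))
      = ((univ.erase (1 : GenDihedral G)).image (fun x => ({1, x} : Finset (GenDihedral G))))
        ∪ ((Rot G ×ˢ Ref G).image (fun p => ({p.1, p.2} : Finset (GenDihedral G)))) := by
    ext S
    simp only [mem_filter, mem_univ, true_and, mem_union, Finset.mem_image, mem_erase,
      Finset.mem_product]
    constructor
    · rintro ⟨⟨h1, h2⟩, hc⟩
      obtain ⟨a, b, hab, rfl⟩ := Finset.card_eq_two.mp hc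
      rcases trichotomy a with rfl | ha | ha
      · exact Or.inl ⟨b, ⟨Ne.symm hab, trivial⟩, rfl⟩
      · rcases trichotomy b with rfl | hb | hb
        · exact Or.inl ⟨a, ⟨hab, trivial⟩, Finset.pair_comm 1 a⟩
        · exact absurd (both_mem_contra ha hb hab h1) (fun h => h)
        · exact Or.inr ⟨(a, b), ⟨ha, hb⟩, rfl⟩
      · rcases trichotomy b with rfl | hb | hb
        · exact Or.inl ⟨a, ⟨hab, trivial⟩, Finset.pair_comm 1 a⟩
        · exact Or.inr ⟨(b, a), ⟨hb, ha⟩, Finset.pair_comm b a⟩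
        · exact absurd (both_mem_contra ha hb hab h2) (fun h => h)
    · rintro (⟨x, hx, rfl⟩ | ⟨p, hp, rfl⟩)
      · refine ⟨⟨inter_pair_le 1 one_not_Rot, inter_pair_le 1 one_not_Ref⟩,
          Finset.card_pair (Ne.symm hx.1)⟩
      · obtain ⟨hp1, hp2⟩ := hp
        have hne := rot_ne_ref hp1 hp2
        refine ⟨⟨?_, inter_pair_le p.1 (fun h => rot_ne_ref hp1 h rfl)⟩, Finset.card_pair hne⟩
        · rw [Finset.pair_comm]
          exact inter_pair_le p.2 (fun h => rot_ne_ref h hp2 rfl : p.2 ∉ Rot G)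
  rw [he]
  have hdisj : Disjoint
      ((univ.erase (1 : GenDihedral G)).image (fun x => ({1, x} : Finset (GenDihedral G))))
      ((Rot G ×ˢ Ref G).image (fun p => ({p.1, p.2} : Finset (GenDihedral G)))) := by
    rw [Finset.disjoint_left]
    rintro S hS1 hS2
    obtain ⟨x, _, rfl⟩ := Finset.mem_image.mp hS1
    obtain ⟨p, hp, hpe⟩ := Finset.mem_image.mp hS2
    rw [Finset.mem_product] at hp
    have h1 : (1 : GenDihedral G) ∈ ({p.1, p.2} : Finset (GenDihedral G)) := by
      rw [hpe]; exact mem_insert_self _ _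
    rcases Finset.mem_insert.mp h1 with h | h
    · exact one_not_Rot (h ▸ hp.1)
    · exact one_not_Ref ((Finset.mem_singleton.mp h) ▸ hp.2)
  rw [Finset.card_union_of_disjoint hdisj]
  have hinj1 : Set.InjOn (fun x => ({1, x} : Finset (GenDihedral G)))
      ↑(univ.erase (1 : GenDihedral G)) := by
    intro x hx y hy hxy
    simp only [Finset.coe_erase, Set.mem_diff, Set.mem_singleton_iff] at hx hy
    have hxy' : ({1, x} : Finset (GenDihedral G)) = {1, y} := hxy
    have : x ∈ ({1, y} : Finset (GenDihedral G)) := by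
      rw [← hxy']; exact mem_insert_of_mem (mem_singleton_self x)
    rcases Finset.mem_insert.mp this with h | h
    · exact absurd h hx.2
    · exact Finset.mem_singleton.mp h
  have hinj2 : Set.InjOn (fun p : GenDihedral G × GenDihedral G =>
      ({p.1, p.2} : Finset (GenDihedral G))) ↑(Rot G ×ˢ Ref G) := by
    intro p hp q hq hpq
    simp only [Finset.coe_product, Set.mem_prod, mem_coe] at hp hq
    have hpq' : ({p.1, p.2} : Finset (GenDihedral G)) = {q.1, q.2} := hpq
    have h1 : p.1 ∈ ({q.1, q.2} : Finset (GenDihedral G)) := by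
      rw [← hpq']; exact mem_insert_self _ _
    have h2 : p.2 ∈ ({q.1, q.2} : Finset (GenDihedral G)) := by
      rw [← hpq']; exact mem_insert_of_mem (mem_singleton_self _)
    have e1 : p.1 = q.1 := by
      rcases Finset.mem_insert.mp h1 with h | h
      · exact h
      · exact absurd (Finset.mem_singleton.mp h) (rot_ne_ref hp.1 hq.2)
    have e2 : p.2 = q.2 := by
      rcases Finset.mem_insert.mp h2 with h | h
      · exact absurd h.symm (rot_ne_ref hq.1 hp.2)
      · exact Finset.mem_singleton.mp h
    exact Prod.ext e1 e2
  rw [Finset.card_image_of_injOn hinj1, Finset.card_image_of_injOn hinj2,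
    Finset.card_erase_of_mem (mem_univ 1), card_univ, card_V, Finset.card_product,
    card_Rot, card_Ref]
  obtain ⟨m, hm⟩ : ∃ m, Fintype.card G = m + 3 := ⟨Fintype.card G - 3, by omega⟩
  rw [hm]
  have h1 : (1 : ℕ) ≤ 2 * (m + 3) := by omega
  have h2 : (1 : ℕ) ≤ m + 3 := by omega
  have h4 : (1 : ℕ) ≤ (m + 3) ^ 2 + (m + 3) := by nlinarith
  zify [h1, h2, h4]
  ring

lemma count3 :
    (univ.filter (fun S : Finset (GenDihedral G) =>
      ((Rot G ∩ S).card ≤ 1 ∧ (Ref G ∩ S).card ≤ 1) ∧ S.card = 3)).card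
      = Fintype.card G * (Fintype.card G - 1) := by
  have he : (univ.filter (fun S : Finset (GenDihedral G) =>
      ((Rot G ∩ S).card ≤ 1 ∧ (Ref G ∩ S).card ≤ 1) ∧ S.card = 3))
      = (Rot G ×ˢ Ref G).image
          (fun p => ({1, p.1, p.2} : Finset (GenDihedral G))) := by
    ext S
    simp only [mem_filter, mem_univ, true_and, Finset.mem_image, Finset.mem_product]
    constructor
    · rintro ⟨⟨h1, h2⟩, hc⟩
      rw [inter_comm] at h1 h2
      have cover : S ⊆ (S ∩ {1}) ∪ ((S ∩ Rot G) ∪ (S ∩ Ref G)) := by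
        intro x hx
        rcases trichotomy x with rfl | h | h
        · exact mem_union_left _ (mem_inter.mpr ⟨hx, mem_singleton_self _⟩)
        · exact mem_union_right _ (mem_union_left _ (mem_inter.mpr ⟨hx, h⟩))
        · exact mem_union_right _ (mem_union_right _ (mem_inter.mpr ⟨hx, h⟩))
      have hle := Finset.card_le_card cover
      have hu := Finset.card_union_le (S ∩ {1}) ((S ∩ Rot G) ∪ (S ∩ Ref G))
      have hu2 := Finset.card_union_le (S ∩ Rot G) (S ∩ Ref G)
      have hs1 : (S ∩ {1}).card ≤ 1 :=
        le_trans (card_le_card inter_subset_right) (le_of_eq (card_singleton _))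
      have hR1 : (S ∩ Rot G).card = 1 := by omega
      have hF1 : (S ∩ Ref G).card = 1 := by omega
      have h11 : (S ∩ {1}).card = 1 := by omega
      obtain ⟨r, hr⟩ := Finset.card_eq_one.mp hR1
      obtain ⟨f, hf⟩ := Finset.card_eq_one.mp hF1
      obtain ⟨x1, hx1⟩ := Finset.card_eq_one.mp h11
      have hrm : r ∈ S ∩ Rot G := by rw [hr]; exact mem_singleton_self r
      have hfm : f ∈ S ∩ Ref G := by rw [hf]; exact mem_singleton_self f
      have hx1m : x1 ∈ S ∩ {1} := by rw [hx1]; exact mem_singleton_self x1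
      have hx1e : x1 = 1 := Finset.mem_singleton.mp (mem_inter.mp hx1m).2
      have h1S : (1 : GenDihedral G) ∈ S := hx1e ▸ (mem_inter.mp hx1m).1
      refine ⟨(r, f), ⟨(mem_inter.mp hrm).2, (mem_inter.mp hfm).2⟩, ?_⟩
      apply Finset.Subset.antisymm
      · intro x hx
        rcases Finset.mem_insert.mp hx with rfl | hx'
        · exact h1S
        · rcases Finset.mem_insert.mp hx' with rfl | hx''
          · exact (mem_inter.mp hrm).1
          · rw [Finset.mem_singleton.mp hx'']; exact (mem_inter.mp hfm).1
      · intro x hx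
        rcases trichotomy x with rfl | h | h
        · exact mem_insert_self _ _
        · have : x ∈ S ∩ Rot G := mem_inter.mpr ⟨hx, h⟩
          rw [hr, Finset.mem_singleton] at this
          rw [this]; exact mem_insert_of_mem (mem_insert_self _ _)
        · have : x ∈ S ∩ Ref G := mem_inter.mpr ⟨hx, h⟩
          rw [hf, Finset.mem_singleton] at this
          rw [this]
          exact mem_insert_of_mem (mem_insert_of_mem (mem_singleton_self _))
    · rintro ⟨p, hp, rfl⟩
      obtain ⟨hp1, hp2⟩ := hp
      have hrf := rot_ne_ref hp1 hp2
      have h1r : (1 : GenDihedral G) ≠ p.1 := fun h => one_not_Rot (h ▸ hp1)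
      have h1f : (1 : GenDihedral G) ≠ p.2 := fun h => one_not_Ref (h ▸ hp2)
      refine ⟨⟨?_, ?_⟩, ?_⟩
      · have hsub : Rot G ∩ {1, p.1, p.2} ⊆ {p.1} := by
          intro y hy
          obtain ⟨hyT, hy2⟩ := mem_inter.mp hy
          rcases Finset.mem_insert.mp hy2 with rfl | hy3
          · exact absurd hyT one_not_Rot
          · rcases Finset.mem_insert.mp hy3 with rfl | hy4
            · exact mem_singleton_self _
            · rw [Finset.mem_singleton.mp hy4] at hyT
              exact absurd rfl (rot_ne_ref hyT hp2)
        exact le_trans (card_le_card hsub) (le_of_eq (card_singleton _))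
      · have hsub : Ref G ∩ {1, p.1, p.2} ⊆ {p.2} := by
          intro y hy
          obtain ⟨hyT, hy2⟩ := mem_inter.mp hy
          rcases Finset.mem_insert.mp hy2 with rfl | hy3
          · exact absurd hyT one_not_Ref
          · rcases Finset.mem_insert.mp hy3 with rfl | hy4
            · exact absurd rfl (rot_ne_ref hp1 hyT)
            · exact hy4
        exact le_trans (card_le_card hsub) (le_of_eq (card_singleton _))
      · rw [Finset.card_insert_of_notMem, Finset.card_insert_of_notMem, card_singleton]
        · simp [hrf]
        · simp [h1r, h1f]
  rw [he]
  have hinj : Set.InjOn (fun p : GenDihedral G × GenDihedral G =>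
      ({1, p.1, p.2} : Finset (GenDihedral G))) ↑(Rot G ×ˢ Ref G) := by
    intro p hp q hq hpq
    simp only [Finset.coe_product, Set.mem_prod, mem_coe] at hp hq
    have hpq' : ({1, p.1, p.2} : Finset (GenDihedral G)) = {1, q.1, q.2} := hpq
    have h1 : p.1 ∈ ({1, q.1, q.2} : Finset (GenDihedral G)) := by
      rw [← hpq']; exact mem_insert_of_mem (mem_insert_self _ _)
    have h2 : p.2 ∈ ({1, q.1, q.2} : Finset (GenDihedral G)) := by
      rw [← hpq']
      exact mem_insert_of_mem (mem_insert_of_mem (mem_singleton_self _))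
    have e1 : p.1 = q.1 := by
      rcases Finset.mem_insert.mp h1 with h | h
      · exact absurd h.symm (fun hh => one_not_Rot (hh ▸ hp.1))
      · rcases Finset.mem_insert.mp h with h' | h'
        · exact h'
        · exact absurd (Finset.mem_singleton.mp h') (rot_ne_ref hp.1 hq.2)
    have e2 : p.2 = q.2 := by
      rcases Finset.mem_insert.mp h2 with h | h
      · exact absurd h.symm (fun hh => one_not_Ref (hh ▸ hp.2))
      · rcases Finset.mem_insert.mp h with h' | h'
        · exact absurd h'.symm (rot_ne_ref hq.1 hp.2)
        · exact Finset.mem_singleton.mp h'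
    exact Prod.ext e1 e2
  rw [Finset.card_image_of_injOn hinj, Finset.card_product, card_Rot, card_Ref]
  exact Nat.mul_comm _ _

end StmtAux
open GenDihedral in
/-- For `G` of odd order `n ≥ 3` (so `z = 1` and `D(G)` is non-abelian), the numbers `sᵢ`
of resolving sets of cardinality `i` of the commuting graph `Γ` of `D(G)` satisfy
`s_{2n-3} = n(n-1)`, `s_{2n-2} = n² + n - 1`, `s_{2n-1} = 2n`, `s_{2n} = 1`;
equivalently, `β(Γ, x) = x^{2n-3}(x³ + 2n x² + (n² + n - 1) x + n(n-1))`. -/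
theorem stmt16 {G : Type} [CommGroup G] [Fintype G] [DecidableEq G]
    (n : ℕ) (hn : n = Fintype.card G) (hodd : Odd n) (hn3 : 3 ≤ n) :
    numResolvingSets (commGraph G) (2 * n - 3) = n * (n - 1) ∧
    numResolvingSets (commGraph G) (2 * n - 2) = n ^ 2 + n - 1 ∧
    numResolvingSets (commGraph G) (2 * n - 1) = 2 * n ∧
    numResolvingSets (commGraph G) (2 * n) = 1 := by
  subst hn
  have h3 : 3 ≤ Fintype.card G := hn3
  have c0 := StmtAux.count_compl (G := G) 0 (by omega)
  rw [Nat.sub_zero] at c0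
  refine ⟨?_, ?_, ?_, ?_⟩
  · rw [StmtAux.num_eq hodd h3, StmtAux.count_compl 3 (by omega), StmtAux.count3]
  · rw [StmtAux.num_eq hodd h3, StmtAux.count_compl 2 (by omega), StmtAux.count2 h3]
  · rw [StmtAux.num_eq hodd h3, StmtAux.count_compl 1 (by omega), StmtAux.count1]
  · rw [StmtAux.num_eq hodd h3, c0, StmtAux.count0]
end
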